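/- arXiv:1009.3660 — 6 statements merged into one kernel-verified Lean document; each statement's English description precedes it below -/
import Mathlib

section
/- Let f : C_n → C_m be a map commuting with the action of Φ_p for every polynomial p ∈ ℂ[t] and with the action of Ψ_q for every polynomial q ∈ ℂ[t]. Suppose f(X,Y) = (P,Q) and P is diagonalizable. Then every eigenvalue of P is an eigenvalue of X. -/
open Matrix Polynomial

noncomputable section

/-- `n×n` complex matrices. -/
abbrev Mat (n : ℕ) := Matrix (Fin n) (Fin n) ℂ

/-- The Calogero–Moser condition: `[X,Y] + I` has rank one. -/
def IsCMPair {n : ℕ} (P : Mat n × Mat n) : Prop :=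
  (P.1 * P.2 - P.2 * P.1 + 1).rank = 1

/-- Simultaneous conjugacy of pairs of matrices. -/
def SimConj {n : ℕ} (P Q : Mat n × Mat n) : Prop :=
  ∃ A : (Mat n)ˣ, Q.1 = ↑A⁻¹ * P.1 * ↑A ∧ Q.2 = ↑A⁻¹ * P.2 * ↑A

/-- Conjugation by a unit, as a `ℂ`-algebra homomorphism. -/
def conjAlgHom {n : ℕ} (A : (Mat n)ˣ) : Mat n →ₐ[ℂ] Mat n where
  toFun X := ↑A⁻¹ * X * ↑A
  map_one' := by show (↑A⁻¹ : Mat n) * 1 * ↑A = 1; rw [mul_one, Units.inv_mul]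
  map_mul' X Y := by simp only [mul_assoc, Units.mul_inv_cancel_left]
  map_zero' := by simp only [mul_zero, zero_mul]
  map_add' X Y := by simp only [mul_add, add_mul]
  commutes' r := by
    show (↑A⁻¹ : Mat n) * algebraMap ℂ (Mat n) r * ↑A = algebraMap ℂ (Mat n) r
    rw [mul_assoc, Algebra.commutes r ((A : Mat n)), ← mul_assoc, Units.inv_mul, one_mul]

lemma conjAlgHom_apply {n : ℕ} (A : (Mat n)ˣ) (X : Mat n) :
    conjAlgHom A X = ↑A⁻¹ * X * ↑A := rfl

lemma simConj_refl {n : ℕ} (P : Mat n × Mat n) : SimConj P P :=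
  ⟨1, by rw [inv_one, Units.val_one, one_mul, mul_one],
      by rw [inv_one, Units.val_one, one_mul, mul_one]⟩

lemma simConj_symm {n : ℕ} {P Q : Mat n × Mat n} (h : SimConj P Q) : SimConj Q P := by
  obtain ⟨A, h1, h2⟩ := h
  refine ⟨A⁻¹, ?_, ?_⟩
  · rw [inv_inv, h1]
    simp only [mul_assoc, Units.mul_inv_cancel_left, Units.mul_inv, mul_one]
  · rw [inv_inv, h2]
    simp only [mul_assoc, Units.mul_inv_cancel_left, Units.mul_inv, mul_one]

lemma simConj_trans {n : ℕ} {P Q R : Mat n × Mat n} (h : SimConj P Q) (h' : SimConj Q R) :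
    SimConj P R := by
  obtain ⟨A, h1, h2⟩ := h
  obtain ⟨B, h1', h2'⟩ := h'
  refine ⟨A * B, ?_, ?_⟩
  · rw [h1', h1, _root_.mul_inv_rev, Units.val_mul, Units.val_mul]
    simp only [mul_assoc]
  · rw [h2', h2, _root_.mul_inv_rev, Units.val_mul, Units.val_mul]
    simp only [mul_assoc]

/-- The setoid of simultaneous conjugacy on Calogero–Moser pairs. -/
def CMSetoid (n : ℕ) : Setoid {P : Mat n × Mat n // IsCMPair P} where
  r P Q := SimConj P.1 Q.1
  iseqv := ⟨fun P => simConj_refl P.1, simConj_symm, simConj_trans⟩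

/-- The `n`-th Calogero–Moser space: simultaneous conjugacy classes of pairs
`(X,Y)` of `n×n` complex matrices with `rank ([X,Y] + 1) = 1`. -/
def CMSpace (n : ℕ) := Quotient (CMSetoid n)

/-- The class of a Calogero–Moser pair in the Calogero–Moser space. -/
def CMSpace.mk {n : ℕ} (P : Mat n × Mat n) (h : IsCMPair P) : CMSpace n :=
  Quotient.mk (CMSetoid n) ⟨P, h⟩

/-- The action `Φ_p (X,Y) = (X + p(Y), Y)` on pairs of matrices. -/
def phiPair {n : ℕ} (p : ℂ[X]) (P : Mat n × Mat n) : Mat n × Mat n :=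
  (P.1 + aeval P.2 p, P.2)

/-- The action `Ψ_q (X,Y) = (X, Y + q(X))` on pairs of matrices. -/
def psiPair {n : ℕ} (q : ℂ[X]) (P : Mat n × Mat n) : Mat n × Mat n :=
  (P.1, P.2 + aeval P.1 q)

lemma commute_aeval {n : ℕ} (Y : Mat n) (p : ℂ[X]) : Commute (aeval Y p) Y := by
  simpa using (Commute.all p Polynomial.X).map (aeval Y)

lemma isCMPair_phiPair {n : ℕ} (p : ℂ[X]) {P : Mat n × Mat n} (h : IsCMPair P) :
    IsCMPair (phiPair p P) := by
  have hc := (commute_aeval P.2 p).eq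
  unfold IsCMPair phiPair at *
  dsimp only
  rw [add_mul, mul_add, hc]
  convert h using 2
  abel

lemma isCMPair_psiPair {n : ℕ} (q : ℂ[X]) {P : Mat n × Mat n} (h : IsCMPair P) :
    IsCMPair (psiPair q P) := by
  have hc := (commute_aeval P.1 q).eq
  unfold IsCMPair psiPair at *
  dsimp only
  rw [add_mul, mul_add, hc]
  convert h using 2
  abel

lemma simConj_phiPair {n : ℕ} (p : ℂ[X]) {P Q : Mat n × Mat n} (h : SimConj P Q) :
    SimConj (phiPair p P) (phiPair p Q) := by
  obtain ⟨A, h1, h2⟩ := h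
  refine ⟨A, ?_, h2⟩
  have hconj : aeval ((↑A⁻¹ : Mat n) * P.2 * (↑A : Mat n)) p
      = (↑A⁻¹ : Mat n) * aeval P.2 p * (↑A : Mat n) := by
    simpa only [conjAlgHom_apply] using aeval_algHom_apply (conjAlgHom A) P.2 p
  show Q.1 + aeval Q.2 p = (↑A⁻¹ : Mat n) * (P.1 + aeval P.2 p) * (↑A : Mat n)
  rw [h1, h2, hconj, mul_add, add_mul]

lemma simConj_psiPair {n : ℕ} (q : ℂ[X]) {P Q : Mat n × Mat n} (h : SimConj P Q) :
    SimConj (psiPair q P) (psiPair q Q) := by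
  obtain ⟨A, h1, h2⟩ := h
  refine ⟨A, h1, ?_⟩
  have hconj : aeval ((↑A⁻¹ : Mat n) * P.1 * (↑A : Mat n)) q
      = (↑A⁻¹ : Mat n) * aeval P.1 q * (↑A : Mat n) := by
    simpa only [conjAlgHom_apply] using aeval_algHom_apply (conjAlgHom A) P.1 q
  show Q.2 + aeval Q.1 q = (↑A⁻¹ : Mat n) * (P.2 + aeval P.1 q) * (↑A : Mat n)
  rw [h1, h2, hconj, mul_add, add_mul]

/-- The action `Φ_p` on the Calogero–Moser space. -/
def Phi {n : ℕ} (p : ℂ[X]) : CMSpace n → CMSpace n :=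
  @Quotient.map _ _ (CMSetoid n) (CMSetoid n)
    (fun P => ⟨phiPair p P.1, isCMPair_phiPair p P.2⟩)
    (fun _ _ h => simConj_phiPair p h)

/-- The action `Ψ_q` on the Calogero–Moser space. -/
def Psi {n : ℕ} (q : ℂ[X]) : CMSpace n → CMSpace n :=
  @Quotient.map _ _ (CMSetoid n) (CMSetoid n)
    (fun P => ⟨psiPair q P.1, isCMPair_psiPair q P.2⟩)
    (fun _ _ h => simConj_psiPair q h)




lemma eval_charpoly_eq {k : ℕ} (M : Mat k) (μ : ℂ) :
    (M.charpoly).eval μ = (algebraMap ℂ (Mat k) μ - M).det := by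
  rw [Matrix.charpoly, _root_.eval_det, matPolyEquiv_charmatrix]
  simp [Matrix.scalar, Matrix.algebraMap_eq_diagonalRingHom]

lemma mem_spectrum_iff_eval {k : ℕ} (M : Mat k) (μ : ℂ) :
    μ ∈ spectrum ℂ M ↔ (M.charpoly).eval μ = 0 := by
  rw [spectrum.mem_iff, Matrix.isUnit_iff_isUnit_det, isUnit_iff_ne_zero, not_ne_iff,
    eval_charpoly_eq]


/-- If `f : C_n → C_m` is equivariant, `f(X,Y) = (P,Q)` and `P` is diagonalizable, then
every eigenvalue of `P` is an eigenvalue of `X`. -/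
theorem eigenvalues_of_equivariant_image (n m : ℕ) (f : CMSpace n → CMSpace m)
    (hPhi : ∀ (p : ℂ[X]) (c : CMSpace n), f (Phi p c) = Phi p (f c))
    (hPsi : ∀ (q : ℂ[X]) (c : CMSpace n), f (Psi q c) = Psi q (f c))
    (X Y : Mat n) (hXY : IsCMPair (X, Y)) (P Q : Mat m) (hPQ : IsCMPair (P, Q))
    (hf : f (CMSpace.mk (X, Y) hXY) = CMSpace.mk (P, Q) hPQ)
    (hdiag : ∃ (B : (Mat m)ˣ) (d : Fin m → ℂ), P = ↑B⁻¹ * Matrix.diagonal d * ↑B) :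
    ∀ μ : ℂ, μ ∈ spectrum ℂ P → μ ∈ spectrum ℂ X := by
  intro μ hμ
  obtain ⟨B, d, hP⟩ := hdiag
  -- μ is in the range of d
  have hrange : ∃ i, d i = μ := by
    have : μ ∈ spectrum ℂ (Matrix.diagonal d) := by
      rwa [hP, spectrum.units_conjugate'] at hμ
    rwa [_root_.spectrum_diagonal] at this
  -- key: whenever aeval X q = 0, the trace of aeval P q vanishes
  have key : ∀ q : ℂ[X], aeval X q = 0 → (aeval P q).trace = 0 := by
    intro q hq
    have h1 : Psi q (CMSpace.mk (X, Y) hXY) = CMSpace.mk (X, Y) hXY := by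
      apply Quotient.sound
      show SimConj (psiPair q (X, Y)) (X, Y)
      have : psiPair q (X, Y) = (X, Y) := by simp [psiPair, hq]
      rw [this]; exact simConj_refl _
    have h2 := hPsi q (CMSpace.mk (X, Y) hXY)
    rw [h1, hf] at h2
    -- h2 : CMSpace.mk (P,Q) hPQ = Psi q (CMSpace.mk (P,Q) hPQ)
    have h3 : SimConj ((P, Q) : Mat m × Mat m) (psiPair q (P, Q)) :=
      @Quotient.exact _ (CMSetoid m) _ _ h2
    obtain ⟨A, _, hA2⟩ := h3
    have hA2' : Q + aeval P q = ↑A⁻¹ * Q * ↑A := hA2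
    have := congrArg Matrix.trace hA2'
    rw [Matrix.trace_add, Matrix.trace_mul_cycle, Units.mul_inv, one_mul] at this
    linear_combination this
  -- the interpolation polynomial
  classical
  set s : Finset ℂ := Finset.image d Finset.univ with hs
  set g : ℂ → ℂ := fun v => if v = μ then 1 else 0 with hg
  set r : ℂ[X] := Lagrange.interpolate s id g with hr
  have hinj : Set.InjOn (id : ℂ → ℂ) ↑s := Function.injective_id.injOn
  have hrval : ∀ i : Fin m, r.eval (d i) = g (d i) := fun i =>
    Lagrange.eval_interpolate_at_node g hinj (Finset.mem_image_of_mem d (Finset.mem_univ i))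
  set q : ℂ[X] := r * X.charpoly with hq
  have hq0 : aeval X q = 0 := by
    rw [hq, _root_.map_mul, Matrix.aeval_self_charpoly, mul_zero]
  have htr := key q hq0
  -- compute the trace of aeval P q via the diagonalization
  have haevalP : aeval P q = ↑B⁻¹ * aeval (Matrix.diagonal d) q * ↑B := by
    rw [hP]
    have := aeval_algHom_apply (conjAlgHom B) (Matrix.diagonal d) q
    exact this
  have hdiagq : aeval (Matrix.diagonal d) q = Matrix.diagonal (fun i => q.eval (d i)) := by
    have := aeval_algHom_apply (Matrix.diagonalAlgHom ℂ : (Fin m → ℂ) →ₐ[ℂ] Mat m) d q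
    simp only [Matrix.diagonalAlgHom_apply] at this
    rw [this]
    exact congrArg Matrix.diagonal (funext fun i => by
      rw [aeval_fn_apply]; exact congrFun (Polynomial.coe_aeval_eq_eval (d i)) q)
  rw [haevalP, Matrix.trace_mul_cycle, Units.mul_inv, one_mul, hdiagq,
    Matrix.trace_diagonal] at htr
  -- evaluate the sum
  have hsum : ∀ i : Fin m, q.eval (d i) = if d i = μ then X.charpoly.eval μ else 0 := by
    intro i
    rw [hq, eval_mul, hrval i, hg]
    by_cases h : d i = μ <;> simp [h]
  rw [Finset.sum_congr rfl (fun i _ => hsum i)] at htr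
  rw [← Finset.sum_filter, Finset.sum_const, nsmul_eq_mul] at htr
  obtain ⟨i0, hi0⟩ := hrange
  have hcard : ((Finset.univ.filter fun i => d i = μ).card : ℂ) ≠ 0 := by
    simp only [ne_eq, Nat.cast_eq_zero, Finset.card_eq_zero]
    intro hemp
    have : i0 ∈ Finset.univ.filter fun i => d i = μ := by simp [hi0]
    rw [hemp] at this; exact absurd this (Finset.notMem_empty i0)
  have : X.charpoly.eval μ = 0 := by
    rcases mul_eq_zero.mp htr with h | h
    · exact absurd h hcard
    · exact h
  rwa [mem_spectrum_iff_eval]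


end
end

section
/- If n > m > 0, there is no map f : C_n → C_m commuting with the action of Φ_p for every polynomial p ∈ ℂ[t] and with the action of Ψ_q for every polynomial q ∈ ℂ[t]. -/
open Matrix Polynomial

noncomputable section

lemma trace_aeval {m : ℕ} (A : Mat m) (h : ∀ k, 1 ≤ k → (A ^ k).trace = 0)
    (f : ℂ[X]) : (aeval A f).trace = f.coeff 0 * m := by
  induction f using Polynomial.induction_on with
  | C a => simp [aeval_C, Algebra.algebraMap_eq_smul_one, Matrix.trace_smul, Matrix.trace_one]
  | add p q hp hq => simp only [_root_.map_add, Matrix.trace_add, hp, hq, coeff_add, add_mul]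
  | monomial k a _ =>
      rw [_root_.map_mul, aeval_C, map_pow, aeval_X,
        Algebra.algebraMap_eq_smul_one, smul_mul_assoc, one_mul, Matrix.trace_smul,
        h (k+1) (by omega)]
      simp [coeff_C_mul, coeff_X_pow]

lemma idem_trace_zero {m : ℕ} (E : Mat m) (hE : E * E = E) (ht : E.trace = 0) : E = 0 := by
  set φ := Matrix.toLin' E with hφ
  have hcomp : φ ∘ₗ φ = φ := by rw [hφ, ← Matrix.toLin'_mul, hE]
  obtain ⟨p, hp⟩ := (LinearMap.isProj_iff_isIdempotentElem φ).mpr hcomp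
  have htr : LinearMap.trace ℂ _ φ = (Module.finrank ℂ p : ℂ) := hp.trace
  have htr2 : LinearMap.trace ℂ _ φ = E.trace := by
    rw [LinearMap.trace_eq_matrix_trace ℂ (Pi.basisFun ℂ (Fin m)) φ]
    congr 1
    rw [LinearMap.toMatrix_eq_toMatrix', hφ]
    exact LinearMap.toMatrix'_toLin' E
  have h0 : (Module.finrank ℂ p : ℂ) = 0 := by rw [← htr, htr2, ht]
  have hfr : Module.finrank ℂ p = 0 := by exact_mod_cast h0
  have hpbot : p = ⊥ := Submodule.finrank_eq_zero.mp hfr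
  have hφ0 : φ = 0 := by
    apply LinearMap.ext
    intro v
    have hmem := hp.map_mem v
    rw [hpbot, Submodule.mem_bot] at hmem
    simpa using hmem
  have hsymm : E = Matrix.toLin'.symm (0 : (Fin m → ℂ) →ₗ[ℂ] Fin m → ℂ) := by
    rw [← hφ0, hφ, LinearEquiv.symm_apply_apply]
  rw [hsymm]
  exact Matrix.toLin'.symm.map_zero

lemma isNilpotent_of_trace_pow {m : ℕ} (A : Mat m)
    (h : ∀ k, 1 ≤ k → (A ^ k).trace = 0) : IsNilpotent A := by
  rcases Nat.eq_zero_or_pos m with hm | hm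
  · refine ⟨1, ?_⟩
    subst hm
    ext i j
    exact Fin.elim0 i
  have hm' : (m : ℂ) ≠ 0 := Nat.cast_ne_zero.mpr hm.ne'
  set χ := A.charpoly with hχ
  have hCH : aeval A χ = 0 := A.aeval_self_charpoly
  have hc0 : χ.coeff 0 = 0 := by
    have h0 : χ.coeff 0 * m = 0 := by
      rw [← trace_aeval A h χ, hCH]
      simp
    exact (mul_eq_zero.mp h0).resolve_right hm'
  have hχne : χ ≠ 0 := A.charpoly_monic.ne_zero
  obtain ⟨g, hgeq, hgnd⟩ := χ.exists_eq_pow_rootMultiplicity_mul_and_not_dvd hχne 0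
  rw [map_zero, sub_zero] at hgeq hgnd
  set j := χ.rootMultiplicity 0 with hj
  have hj1 : 1 ≤ j := by
    rw [hj]
    apply Nat.one_le_iff_ne_zero.mpr
    apply Nat.pos_iff_ne_zero.mp
    apply (Polynomial.rootMultiplicity_pos hχne).mpr
    rw [Polynomial.IsRoot, ← Polynomial.coeff_zero_eq_eval_zero, hc0]
  have hcop : IsCoprime ((X : ℂ[X]) ^ j) g :=
    ((Polynomial.irreducible_X.coprime_iff_not_dvd).mpr hgnd).pow_left
  obtain ⟨u, v, huv⟩ := hcop
  have hpoly : (u * X ^ j) * (u * X ^ j) - u * X ^ j = -(u * v) * χ := by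
    rw [hgeq]
    linear_combination (u * X ^ j) * huv
  have hrhs0 : aeval A (-(u * v) * χ) = 0 := by
    rw [_root_.map_mul (aeval A) (-(u*v)) χ, hCH, mul_zero]
  have hidem : aeval A (u * X ^ j) * aeval A (u * X ^ j) = aeval A (u * X ^ j) := by
    have h2 : aeval A (u * X ^ j) * aeval A (u * X ^ j) - aeval A (u * X ^ j) = 0 := by
      rw [← _root_.map_mul (aeval A) (u * X ^ j) (u * X ^ j), ← _root_.map_sub, hpoly, hrhs0]
    exact sub_eq_zero.mp h2
  have htrE : (aeval A (u * X ^ j)).trace = 0 := by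
    have hj0 : ¬ ((0:ℕ) = j) := by omega
    rw [trace_aeval A h _, Polynomial.mul_coeff_zero, Polynomial.coeff_X_pow]
    simp [hj0]
  have hE0 : aeval A (u * X ^ j) = 0 := idem_trace_zero _ hidem htrE
  have hvg : aeval A (v * g) = 1 := by
    have hvge : (v * g : ℂ[X]) = 1 - u * X ^ j := by linear_combination huv
    rw [hvge, _root_.map_sub, _root_.map_one, hE0, sub_zero]
  refine ⟨j, ?_⟩
  have hXg : A ^ j * aeval A g = 0 := by
    have h5 : aeval A (X ^ j * g) = 0 := by rw [← hgeq]; exact hCH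
    rw [_root_.map_mul (aeval A) (X ^ j) g, map_pow, aeval_X] at h5
    exact h5
  have hcomm : aeval A v * aeval A g = aeval A g * aeval A v := by
    rw [← _root_.map_mul (aeval A) v g, ← _root_.map_mul (aeval A) g v, mul_comm v g]
  calc A ^ j = A ^ j * aeval A (v * g) := by rw [hvg, mul_one]
    _ = A ^ j * (aeval A g * aeval A v) := by
          rw [_root_.map_mul (aeval A) v g, hcomm]
    _ = (A ^ j * aeval A g) * aeval A v := by rw [mul_assoc]
    _ = 0 := by rw [hXg, zero_mul]

lemma pow_eq_zero_of_trace_pow {m N : ℕ} (A : Mat m)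
    (h : ∀ k, N ≤ k → (A ^ k).trace = 0) : A ^ m = 0 := by
  have hB : IsNilpotent (A ^ (N + 1)) := by
    apply isNilpotent_of_trace_pow
    intro k hk
    rw [← pow_mul]
    apply h
    calc N ≤ N + 1 := Nat.le_succ N
      _ = (N+1) * 1 := (mul_one _).symm
      _ ≤ (N+1) * k := Nat.mul_le_mul_left _ hk
  have hA : IsNilpotent A := by
    obtain ⟨r, hr⟩ := hB
    exact ⟨(N+1) * r, by rw [pow_mul]; exact hr⟩
  have hχ : A.charpoly = X ^ m := by
    have h1 : IsNilpotent (A.charpoly - X ^ (Fintype.card (Fin m))) :=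
      Matrix.isNilpotent_charpoly_sub_pow_of_isNilpotent hA
    have h2 := h1.eq_zero
    rw [sub_eq_zero] at h2
    simpa using h2
  have h3 := A.aeval_self_charpoly
  rw [hχ, map_pow, aeval_X] at h3
  exact h3





def cmY (n : ℕ) : Mat n := Matrix.of fun i j : Fin n => if (i:ℕ)+1 = (j:ℕ) then 1 else 0
def cmX (n : ℕ) : Mat n := Matrix.of fun i j : Fin n => if (i:ℕ) = (j:ℕ)+1 then ((i:ℕ):ℂ) - n else 0
def cmZ (n : ℕ) : Mat n := Matrix.of fun i j : Fin n => if ((i:ℕ)+1) % n = (j:ℕ) then 1 else 0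
def cval (n : ℕ) : ℂ := ∏ t ∈ Finset.range (n-1), (((t:ℕ)+1 : ℂ) - n)

lemma fin_sum_if {n : ℕ} (c : ℕ) (f : Fin n → ℂ) :
    (∑ l : Fin n, if (l:ℕ) = c then f l else 0)
      = if h : c < n then f ⟨c, h⟩ else 0 := by
  split_ifs with h
  · rw [Finset.sum_eq_single (⟨c, h⟩ : Fin n)]
    · simp
    · intro b _ hb
      simp only [ite_eq_right_iff]
      intro hbc
      exact absurd (Fin.ext hbc : b = ⟨c, h⟩) hb
    · intro hmem; exact absurd (Finset.mem_univ _) hmem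
  · apply Finset.sum_eq_zero
    intro l _
    have : (l:ℕ) ≠ c := fun hl => h (hl ▸ l.isLt)
    simp [this]

lemma cmY_pow (n k : ℕ) :
    (cmY n) ^ k = Matrix.of fun i j : Fin n => if (i:ℕ)+k = (j:ℕ) then 1 else 0 := by
  induction k with
  | zero =>
      ext i j
      simp [Matrix.one_apply, Fin.ext_iff]
  | succ k ih =>
      ext i j
      rw [pow_succ, ih, Matrix.mul_apply]
      simp only [Matrix.of_apply, cmY]
      have hsum : (∑ l : Fin n, (if (i:ℕ)+k = (l:ℕ) then (1:ℂ) else 0) *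
          (if (l:ℕ)+1 = (j:ℕ) then 1 else 0))
          = ∑ l : Fin n, if (l:ℕ) = (i:ℕ)+k then (if (l:ℕ)+1 = (j:ℕ) then (1:ℂ) else 0) else 0 := by
        apply Finset.sum_congr rfl
        intro l _
        by_cases hl : (l:ℕ) = (i:ℕ)+k
        · rw [if_pos hl, if_pos hl.symm, one_mul]
        · rw [if_neg hl, if_neg (fun h => hl h.symm : ¬ ((i:ℕ)+k = (l:ℕ))), zero_mul]
      rw [hsum, fin_sum_if]
      by_cases h1 : (i:ℕ)+k < n
      · rw [dif_pos h1]
        simp only [Fin.val_mk]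
        split_ifs with h2 h3 h3 <;> first | rfl | omega
      · rw [dif_neg h1, if_neg (by have := j.isLt; omega : ¬ ((i:ℕ)+(k+1) = (j:ℕ)))]

lemma cmX_pow (n k : ℕ) :
    (cmX n) ^ k = Matrix.of fun i j : Fin n => if (i:ℕ) = (j:ℕ)+k then
      (∏ t ∈ Finset.range k, (((j:ℕ):ℂ)+1+t - n)) else 0 := by
  induction k with
  | zero =>
      ext i j
      simp [Matrix.one_apply, Fin.ext_iff]
  | succ k ih =>
      ext i j
      rw [pow_succ', ih, Matrix.mul_apply]
      simp only [Matrix.of_apply, cmX]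
      have hsum : (∑ l : Fin n, (if (i:ℕ) = (l:ℕ)+1 then ((i:ℕ):ℂ) - n else 0) *
          (if (l:ℕ) = (j:ℕ)+k then (∏ t ∈ Finset.range k, (((j:ℕ):ℂ)+1+t - n)) else 0))
          = ∑ l : Fin n, if (l:ℕ) = (j:ℕ)+k then
              (if (i:ℕ) = (l:ℕ)+1 then (((i:ℕ):ℂ) - n) * (∏ t ∈ Finset.range k, (((j:ℕ):ℂ)+1+t - n)) else 0) else 0 := by
        apply Finset.sum_congr rfl
        intro l _
        by_cases hl : (l:ℕ) = (j:ℕ)+k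
        · rw [if_pos hl]
          by_cases hi : (i:ℕ) = (l:ℕ)+1
          · rw [if_pos hi, if_pos hi, if_pos hl]
          · rw [if_neg hi, if_neg hi, zero_mul, if_pos hl]
        · rw [if_neg hl, if_neg hl, mul_zero]
      rw [hsum, fin_sum_if]
      by_cases h1 : (j:ℕ)+k < n
      · rw [dif_pos h1]
        simp only [Fin.val_mk]
        split_ifs with h2 h3 h3
        · have hc : ((i:ℕ):ℂ) = ((j:ℕ):ℂ) + k + 1 := by
            have : ((i:ℕ) : ℂ) = (((j:ℕ)+k+1 : ℕ) : ℂ) := by exact_mod_cast congrArg (fun x : ℕ => (x:ℂ)) h2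
            rw [this]; push_cast; ring
          rw [Finset.prod_range_succ, hc]
          ring
        · omega
        · omega
        · rfl
      · rw [dif_neg h1, if_neg (by have := i.isLt; omega : ¬ ((i:ℕ) = (j:ℕ)+(k+1)))]

lemma cmZ_pow (n k : ℕ) (hn : 0 < n) :
    (cmZ n) ^ k = Matrix.of fun i j : Fin n => if ((i:ℕ)+k) % n = (j:ℕ) then 1 else 0 := by
  induction k with
  | zero =>
      ext i j
      simp [Matrix.one_apply, Fin.ext_iff, Nat.mod_eq_of_lt i.isLt]
  | succ k ih =>
      ext i j
      rw [pow_succ, ih, Matrix.mul_apply]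
      simp only [Matrix.of_apply, cmZ]
      have hsum : (∑ l : Fin n, (if ((i:ℕ)+k) % n = (l:ℕ) then (1:ℂ) else 0) *
          (if ((l:ℕ)+1) % n = (j:ℕ) then 1 else 0))
          = ∑ l : Fin n, if (l:ℕ) = ((i:ℕ)+k) % n then
              (if ((l:ℕ)+1) % n = (j:ℕ) then (1:ℂ) else 0) else 0 := by
        apply Finset.sum_congr rfl
        intro l _
        by_cases hl : (l:ℕ) = ((i:ℕ)+k) % n
        · rw [if_pos hl, if_pos hl.symm, one_mul]
        · rw [if_neg hl, if_neg (fun h => hl h.symm), zero_mul]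
      rw [hsum, fin_sum_if]
      have hlt : ((i:ℕ)+k) % n < n := Nat.mod_lt _ hn
      rw [dif_pos hlt]
      simp only [Fin.val_mk]
      have hmod : (((i:ℕ)+k) % n + 1) % n = ((i:ℕ)+(k+1)) % n := by
        rw [Nat.mod_add_mod, Nat.add_assoc]
      rw [hmod]

lemma cval_ne_zero (n : ℕ) : cval n ≠ 0 := by
  unfold cval
  apply Finset.prod_ne_zero_iff.mpr
  intro t ht
  have htn : t + 1 < n := by
    have := Finset.mem_range.mp ht
    omega
  intro hzero
  rw [sub_eq_zero] at hzero
  have hcast : ((t+1 : ℕ) : ℂ) = ((n:ℕ) : ℂ) := by push_cast; linear_combination hzero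
  exact absurd (Nat.cast_injective hcast) (by omega)

lemma cmY_pow_n (n : ℕ) : (cmY n) ^ n = 0 := by
  rw [cmY_pow]
  ext i j
  have : ¬ ((i:ℕ)+n = (j:ℕ)) := by have := j.isLt; omega
  simp [this]

lemma cmX_pow_n (n : ℕ) : (cmX n) ^ n = 0 := by
  rw [cmX_pow]
  ext i j
  have : ¬ ((i:ℕ) = (j:ℕ)+n) := by have := i.isLt; omega
  simp [this]

lemma cmZ_pow_eq_one (n : ℕ) (hn : 0 < n) : (cmZ n) ^ n = 1 := by
  rw [cmZ_pow n n hn]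
  ext i j
  simp [Matrix.one_apply, Fin.ext_iff, Nat.mod_eq_of_lt i.isLt]

lemma cmZ_eq (n : ℕ) (hn : 0 < n) :
    cmZ n = cmY n + (cval n)⁻¹ • (cmX n) ^ (n-1) := by
  rw [cmX_pow]
  ext i j
  simp only [Matrix.add_apply, Matrix.smul_apply, Matrix.of_apply, cmZ, cmY, smul_eq_mul]
  by_cases hi : (i:ℕ) = n - 1
  · have hin : (i:ℕ)+1 = n := by have := i.isLt; omega
    have h1 : ((i:ℕ)+1) % n = 0 := by rw [hin, Nat.mod_self]
    rw [h1]
    by_cases hj : (j:ℕ) = 0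
    · have hcond : (i:ℕ) = (j:ℕ) + (n-1) := by omega
      have hY : ¬ ((i:ℕ)+1 = (j:ℕ)) := by omega
      rw [if_pos hj.symm, if_neg hY, if_pos hcond]
      have hprod : (∏ t ∈ Finset.range (n-1), (((j:ℕ):ℂ)+1+t - n)) = cval n := by
        unfold cval
        apply Finset.prod_congr rfl
        intro t _
        have hjc : ((j:ℕ):ℂ) = 0 := by exact_mod_cast congrArg (fun x : ℕ => (x:ℂ)) hj
        rw [hjc]
        ring
      rw [hprod, inv_mul_cancel₀ (cval_ne_zero n), zero_add]
    · have hY : ¬ ((i:ℕ)+1 = (j:ℕ)) := by have := j.isLt; omega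
      have hX : ¬ ((i:ℕ) = (j:ℕ) + (n-1)) := by have := j.isLt; omega
      rw [if_neg (fun h => hj h.symm : ¬ ((0:ℕ) = (j:ℕ))), if_neg hY, if_neg hX]
      ring
  · have hin : (i:ℕ)+1 < n := by have := i.isLt; omega
    have h1 : ((i:ℕ)+1) % n = (i:ℕ)+1 := Nat.mod_eq_of_lt hin
    rw [h1]
    have hX : ¬ ((i:ℕ) = (j:ℕ) + (n-1)) := by have := j.isLt; omega
    rw [if_neg hX]
    ring

lemma cmXY (n : ℕ) : cmX n * cmY n
    = Matrix.of fun i j : Fin n => if ((i:ℕ) = (j:ℕ) ∧ 1 ≤ (i:ℕ)) then ((i:ℕ):ℂ) - n else 0 := by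
  ext i j
  rw [Matrix.mul_apply]
  simp only [Matrix.of_apply, cmX, cmY]
  have hsum : (∑ l : Fin n, (if (i:ℕ) = (l:ℕ)+1 then ((i:ℕ):ℂ) - n else 0) *
      (if (l:ℕ)+1 = (j:ℕ) then 1 else 0))
      = ∑ l : Fin n, if (l:ℕ) = (i:ℕ)-1 then
          (if ((i:ℕ) = (l:ℕ)+1 ∧ (l:ℕ)+1 = (j:ℕ)) then ((i:ℕ):ℂ) - n else 0) else 0 := by
    apply Finset.sum_congr rfl
    intro l _
    by_cases h1 : (i:ℕ) = (l:ℕ)+1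
    · have hl : (l:ℕ) = (i:ℕ)-1 := by omega
      rw [if_pos h1, if_pos hl]
      by_cases h2 : (l:ℕ)+1 = (j:ℕ)
      · rw [if_pos h2, if_pos ⟨h1, h2⟩, mul_one]
      · rw [if_neg h2, if_neg (fun h => h2 h.2), mul_zero]
    · rw [if_neg h1, zero_mul]
      by_cases h3 : (l:ℕ) = (i:ℕ)-1
      · rw [if_pos h3, if_neg (fun h => h1 h.1)]
      · rw [if_neg h3]
  rw [hsum, fin_sum_if]
  have hlt : (i:ℕ)-1 < n := by have := i.isLt; omega
  rw [dif_pos hlt]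
  simp only [Fin.val_mk]
  split_ifs with h1 h2 h2 <;> first | rfl | omega

lemma cmYX (n : ℕ) : cmY n * cmX n
    = Matrix.of fun i j : Fin n => if ((i:ℕ) = (j:ℕ) ∧ (i:ℕ)+1 < n) then (((i:ℕ):ℂ)+1) - n else 0 := by
  ext i j
  rw [Matrix.mul_apply]
  simp only [Matrix.of_apply, cmX, cmY]
  have hsum : (∑ l : Fin n, (if (i:ℕ)+1 = (l:ℕ) then (1:ℂ) else 0) *
      (if (l:ℕ) = (j:ℕ)+1 then ((l:ℕ):ℂ) - n else 0))
      = ∑ l : Fin n, if (l:ℕ) = (i:ℕ)+1 then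
          (if (l:ℕ) = (j:ℕ)+1 then ((l:ℕ):ℂ) - n else 0) else 0 := by
    apply Finset.sum_congr rfl
    intro l _
    by_cases h1 : (l:ℕ) = (i:ℕ)+1
    · rw [if_pos h1, if_pos h1.symm, one_mul]
    · rw [if_neg h1, if_neg (fun h => h1 h.symm), zero_mul]
  rw [hsum, fin_sum_if]
  by_cases hlt : (i:ℕ)+1 < n
  · rw [dif_pos hlt]
    simp only [Fin.val_mk]
    split_ifs with h2 h3 h3
    · push_cast
      ring
    · omega
    · omega
    · rfl
  · rw [dif_neg hlt, if_neg (fun h => hlt h.2)]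

lemma cm_comm (n : ℕ) (hn : 1 < n) :
    cmX n * cmY n - cmY n * cmX n + 1
      = Matrix.diagonal (fun i : Fin n => if (i:ℕ) = 0 then (n:ℂ) else 0) := by
  rw [cmXY, cmYX]
  ext i j
  rw [Matrix.add_apply, Matrix.sub_apply, Matrix.one_apply, Matrix.diagonal_apply]
  simp only [Matrix.of_apply]
  by_cases hij : i = j
  · subst hij
    rw [if_pos rfl, if_pos rfl]
    by_cases h0 : (i:ℕ) = 0
    · have hc : ((i:ℕ):ℂ) = 0 := by exact_mod_cast congrArg (fun x : ℕ => (x:ℂ)) h0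
      rw [if_pos h0, if_neg (by omega : ¬ ((i:ℕ) = (i:ℕ) ∧ 1 ≤ (i:ℕ))),
        if_pos (⟨rfl, by omega⟩ : (i:ℕ) = (i:ℕ) ∧ (i:ℕ)+1 < n)]
      rw [hc]
      ring
    · rw [if_neg h0, if_pos (⟨rfl, by omega⟩ : (i:ℕ) = (i:ℕ) ∧ 1 ≤ (i:ℕ))]
      by_cases hlast : (i:ℕ)+1 < n
      · rw [if_pos (⟨rfl, hlast⟩ : (i:ℕ) = (i:ℕ) ∧ (i:ℕ)+1 < n)]
        ring
      · rw [if_neg (by omega : ¬ ((i:ℕ) = (i:ℕ) ∧ (i:ℕ)+1 < n))]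
        have hieq : (i:ℕ)+1 = n := by have := i.isLt; omega
        have hc : ((i:ℕ):ℂ) + 1 = n := by exact_mod_cast congrArg (fun x : ℕ => (x:ℂ)) hieq
        linear_combination hc
  · have hijn : ¬ ((i:ℕ) = (j:ℕ)) := fun h => hij (Fin.ext h)
    rw [if_neg hij, if_neg hij, if_neg (by omega : ¬ ((i:ℕ) = (j:ℕ) ∧ 1 ≤ (i:ℕ))),
      if_neg (by omega : ¬ ((i:ℕ) = (j:ℕ) ∧ (i:ℕ)+1 < n))]
    ring

/-! ### Auxiliary lemmas for the main theorem -/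

lemma pow_zero_ge {N : ℕ} {A : Mat N} {a k : ℕ} (h : A ^ a = 0) (hk : a ≤ k) : A ^ k = 0 := by
  calc A ^ k = A ^ a * A ^ (k - a) := by rw [← pow_add]; congr 1; omega
    _ = 0 := by rw [h, zero_mul]

lemma trace_conj_eq {N : ℕ} (A : (Mat N)ˣ) (M : Mat N) :
    (((A⁻¹ : (Mat N)ˣ) : Mat N) * M * (A : Mat N)).trace = M.trace := by
  rw [Matrix.trace_mul_comm, ← mul_assoc, A.mul_inv, one_mul]

lemma isCMPair_cm (n : ℕ) (hn : 1 < n) : IsCMPair (cmX n, cmY n) := by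
  unfold IsCMPair
  dsimp only
  rw [cm_comm n hn]
  classical
  rw [Matrix.rank_diagonal, Fintype.card_subtype]
  have hset : (Finset.univ.filter fun i : Fin n =>
      ((fun i : Fin n => if (i:ℕ) = 0 then (n:ℂ) else 0) i ≠ 0)) = {(⟨0, by omega⟩ : Fin n)} := by
    ext i
    simp only [Finset.mem_filter, Finset.mem_univ, true_and, Finset.mem_singleton]
    constructor
    · intro h
      by_cases h0 : (i:ℕ) = 0
      · exact Fin.ext h0
      · rw [if_neg h0] at h
        exact absurd rfl h
    · intro h
      subst h
      rw [if_pos rfl]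
      exact Nat.cast_ne_zero.mpr (by omega)
  rw [hset, Finset.card_singleton]

lemma Phi_mk {N : ℕ} (p : ℂ[X]) (P : Mat N × Mat N) (h : IsCMPair P) :
    Phi p (Quotient.mk (CMSetoid N) ⟨P, h⟩)
      = Quotient.mk (CMSetoid N) ⟨phiPair p P, isCMPair_phiPair p h⟩ := rfl

lemma Psi_mk {N : ℕ} (q : ℂ[X]) (P : Mat N × Mat N) (h : IsCMPair P) :
    Psi q (Quotient.mk (CMSetoid N) ⟨P, h⟩)
      = Quotient.mk (CMSetoid N) ⟨psiPair q P, isCMPair_psiPair q h⟩ := rfl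

/-- If `n > m > 0` there is no map `C_n → C_m` commuting with all `Φ_p` and `Ψ_q`. -/
theorem no_equivariant_map_CM_of_gt (n m : ℕ) (hm : 0 < m) (hnm : m < n) :
    ¬ ∃ f : CMSpace n → CMSpace m,
      (∀ (p : ℂ[X]) (c : CMSpace n), f (Phi p c) = Phi p (f c)) ∧
      (∀ (q : ℂ[X]) (c : CMSpace n), f (Psi q c) = Psi q (f c)) := by
  rintro ⟨f, hPhi, hPsi⟩
  have hn1 : 1 < n := lt_of_le_of_lt hm hnm
  have hn0 : 0 < n := by omega
  have hCM := isCMPair_cm n hn1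
  set c := cval n with hc
  set Pn : CMSpace n := Quotient.mk (CMSetoid n) ⟨(cmX n, cmY n), hCM⟩ with hPn
  obtain ⟨Q, hQ⟩ := Quotient.exists_rep (f Pn)
  obtain ⟨⟨X', Y'⟩, hQCM⟩ := Q
  -- trace constraints from exact fixed points on the C_n side
  have keyPhi : ∀ p : ℂ[X], phiPair p (cmX n, cmY n) = (cmX n, cmY n) →
      (aeval Y' p).trace = 0 := by
    intro p hfix
    have h1 : Phi p Pn = Pn := by
      rw [hPn, Phi_mk]
      congr 1
      exact Subtype.ext hfix
    have h2 : Phi p (f Pn) = f Pn := by rw [← hPhi p Pn, h1]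
    rw [← hQ, Phi_mk] at h2
    have h3 := Quotient.exact h2
    obtain ⟨A, hA1, _⟩ := h3
    have hA1' : X' = ((A⁻¹ : (Mat m)ˣ) : Mat m) * (X' + aeval Y' p) * (A : Mat m) := hA1
    have h4 := congrArg Matrix.trace hA1'
    rw [trace_conj_eq, Matrix.trace_add] at h4
    exact (left_eq_add.mp h4)
  have keyPsi : ∀ q : ℂ[X], psiPair q (cmX n, cmY n) = (cmX n, cmY n) →
      (aeval X' q).trace = 0 := by
    intro q hfix
    have h1 : Psi q Pn = Pn := by
      rw [hPn, Psi_mk]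
      congr 1
      exact Subtype.ext hfix
    have h2 : Psi q (f Pn) = f Pn := by rw [← hPsi q Pn, h1]
    rw [← hQ, Psi_mk] at h2
    have h3 := Quotient.exact h2
    obtain ⟨A, _, hA2⟩ := h3
    have hA2' : Y' = ((A⁻¹ : (Mat m)ˣ) : Mat m) * (Y' + aeval X' q) * (A : Mat m) := hA2
    have h4 := congrArg Matrix.trace hA2'
    rw [trace_conj_eq, Matrix.trace_add] at h4
    exact (left_eq_add.mp h4)
  -- hence X', Y' are nilpotent with X'^m = Y'^m = 0
  have hY'm : Y' ^ m = 0 := by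
    apply pow_eq_zero_of_trace_pow (N := n)
    intro k hk
    have hfix : phiPair (X ^ k : ℂ[X]) (cmX n, cmY n) = (cmX n, cmY n) := by
      unfold phiPair
      rw [aeval_X_pow, pow_zero_ge (cmY_pow_n n) hk, add_zero]
    have := keyPhi (X ^ k) hfix
    rwa [aeval_X_pow] at this
  have hX'm : X' ^ m = 0 := by
    apply pow_eq_zero_of_trace_pow (N := n)
    intro k hk
    have hfix : psiPair (X ^ k : ℂ[X]) (cmX n, cmY n) = (cmX n, cmY n) := by
      unfold psiPair
      rw [aeval_X_pow, pow_zero_ge (cmX_pow_n n) hk, add_zero]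
    have := keyPsi (X ^ k) hfix
    rwa [aeval_X_pow] at this
  -- the word
  have hcop : IsCoprime ((X : ℂ[X]) ^ m) ((X - 1) ^ n) :=
    IsCoprime.pow (⟨1, -1, by ring⟩ : IsCoprime (X : ℂ[X]) (X - 1))
  obtain ⟨u, v, huv⟩ := hcop
  set q₁ : ℂ[X] := C c⁻¹ * X ^ (n-1) with hq₁
  set p₂ : ℂ[X] := X ^ n with hp₂
  set q₃ : ℂ[X] := (C (-c⁻¹) * (X - 1) ^ (n-1) * u) * X ^ m with hq₃
  -- C_n-side explicit computation of the word
  have e1 : psiPair q₁ (cmX n, cmY n) = (cmX n, cmZ n) := by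
    unfold psiPair
    have ha : aeval (cmX n) q₁ = c⁻¹ • (cmX n) ^ (n-1) := by
      rw [hq₁, _root_.map_mul, aeval_C, aeval_X_pow, Algebra.algebraMap_eq_smul_one,
        smul_mul_assoc, one_mul]
    rw [ha]
    dsimp only
    rw [← cmZ_eq n hn0]
  have e2 : phiPair p₂ (cmX n, cmZ n) = (cmX n + 1, cmZ n) := by
    unfold phiPair
    rw [hp₂, aeval_X_pow]
    dsimp only
    rw [cmZ_pow_eq_one n hn0]
  have e3 : psiPair q₃ (cmX n + 1, cmZ n) = (cmX n + 1, cmY n) := by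
    unfold psiPair
    have haux : aeval (cmX n + 1) (X - 1 : ℂ[X]) = cmX n := by
      rw [_root_.map_sub, aeval_X, _root_.map_one, add_sub_cancel_right]
    have ha : aeval (cmX n + 1) q₃ = -(c⁻¹ • (cmX n) ^ (n-1)) := by
      have hsplit : q₃ = C (-c⁻¹) * (X - 1) ^ (n-1) - C (-c⁻¹) * (X - 1) ^ (n-1) * (v * (X - 1) ^ n) := by
        rw [hq₃]
        linear_combination (C (-c⁻¹) * (X - 1 : ℂ[X]) ^ (n-1)) * huv
      rw [hsplit]
      simp only [_root_.map_sub, _root_.map_mul, map_pow, haux, aeval_C, cmX_pow_n n,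
        mul_zero, sub_zero]
      rw [Algebra.algebraMap_eq_smul_one, smul_mul_assoc, one_mul, neg_smul]
    rw [ha]
    dsimp only
    rw [cmZ_eq n hn0]
    congr 1
    abel
  have efinal : phiPair (C 1 : ℂ[X]) (cmX n, cmY n) = (cmX n + 1, cmY n) := by
    unfold phiPair
    rw [aeval_C, _root_.map_one]
  -- the word equals Φ_{C 1} on the class Pn
  have hword : Psi q₃ (Phi p₂ (Psi q₁ Pn)) = Phi (C 1) Pn := by
    rw [hPn, Psi_mk, Phi_mk, Psi_mk, Phi_mk]
    congr 1
    apply Subtype.ext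
    show psiPair q₃ (phiPair p₂ (psiPair q₁ (cmX n, cmY n))) = phiPair (C 1) (cmX n, cmY n)
    rw [e1, e2, e3, efinal]
  -- but the word fixes f Pn pointwise
  have hfm1 : psiPair q₁ (X', Y') = (X', Y') := by
    unfold psiPair
    have ha : aeval X' q₁ = 0 := by
      rw [hq₁, _root_.map_mul, aeval_C, aeval_X_pow,
        pow_zero_ge hX'm (by omega : m ≤ n - 1), mul_zero]
    rw [ha, add_zero]
  have hfm2 : phiPair p₂ (X', Y') = (X', Y') := by
    unfold phiPair
    rw [hp₂, aeval_X_pow, pow_zero_ge hY'm (by omega : m ≤ n), add_zero]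
  have hfm3 : psiPair q₃ (X', Y') = (X', Y') := by
    unfold psiPair
    have ha : aeval X' q₃ = 0 := by
      rw [hq₃, _root_.map_mul, aeval_X_pow, hX'm, mul_zero]
    rw [ha, add_zero]
  have hfix_word : Psi q₃ (Phi p₂ (Psi q₁ (f Pn))) = f Pn := by
    rw [← hQ, Psi_mk, Phi_mk, Psi_mk]
    apply congrArg
    apply Subtype.ext
    show psiPair q₃ (phiPair p₂ (psiPair q₁ (X', Y'))) = (X', Y')
    rw [hfm1, hfm2, hfm3]
  -- combine
  have hfinal : Phi (C 1) (f Pn) = f Pn := by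
    calc Phi (C 1) (f Pn) = f (Phi (C 1) Pn) := (hPhi _ _).symm
      _ = f (Psi q₃ (Phi p₂ (Psi q₁ Pn))) := by rw [hword]
      _ = Psi q₃ (Phi p₂ (Psi q₁ (f Pn))) := by
            rw [hPsi q₃ _, hPhi p₂ _, hPsi q₁ _]
      _ = f Pn := hfix_word
  -- contradiction via trace
  rw [← hQ, Phi_mk] at hfinal
  obtain ⟨A, hA1, _⟩ := Quotient.exact hfinal
  have hA1' : X' = ((A⁻¹ : (Mat m)ˣ) : Mat m) * (X' + aeval Y' (C 1 : ℂ[X])) * (A : Mat m) := hA1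
  have h4 := congrArg Matrix.trace hA1'
  rw [trace_conj_eq, Matrix.trace_add] at h4
  have h6 : (aeval Y' (C 1 : ℂ[X])).trace = 0 := left_eq_add.mp h4
  rw [aeval_C, _root_.map_one, Matrix.trace_one] at h6
  have h7 : (m : ℂ) = 0 := by simpa using h6
  have : m = 0 := Nat.cast_eq_zero.mp h7
  omega

end
end

section
/- Let f : C_n → C_m be a map commuting with the action of Φ_p for every polynomial p ∈ ℂ[t], with the action of Ψ_q for every polynomial q ∈ ℂ[t], and with the scaling action R_λ for every λ ∈ ℂ^×. Write f(X_0, Y_0) = (P,Q), where X_0 is the n×n matrix with subdiagonal entries 1, 2, …, n−1 and Y_0 is the n×n matrix with superdiagonal entries all 1. Then P and Q are nilpotent. -/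
open Matrix Polynomial

noncomputable section

-- matrices block
/-- The subdiagonal matrix `X(a)` with `(i+1,i)` entry `a i` (1-indexed). -/
def subd (n : ℕ) (a : ℕ → ℂ) : Mat n :=
  Matrix.of fun i j => if (i : ℕ) = (j : ℕ) + 1 then a (i : ℕ) else 0

/-- The matrix `X₀` with subdiagonal entries `1, 2, …, n-1`. -/
def X0 (n : ℕ) : Mat n := subd n (fun i => (i : ℂ))

/-- The matrix `Y₀` with superdiagonal entries all `1`. -/
def Y0 (n : ℕ) : Mat n :=
  Matrix.of fun i j => if (j : ℕ) = (i : ℕ) + 1 then 1 else 0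

/-- The vector `a(r) = (1, 2, …, r-1, -(n-r), …, -2, -1)` (1-indexed entries `1,…,n-1`). -/
def avec (n r : ℕ) : ℕ → ℂ := fun i => if i < r then (i : ℂ) else (i : ℂ) - n

-- scaling block
/-- The scaling action `R_λ(X,Y) = (λ⁻¹ X, λ Y)` on pairs of matrices. -/
def scalePair {n : ℕ} (u : ℂˣ) (P : Mat n × Mat n) : Mat n × Mat n :=
  (((u⁻¹ : ℂˣ) : ℂ) • P.1, (u : ℂ) • P.2)

lemma isCMPair_scalePair {n : ℕ} (u : ℂˣ) {P : Mat n × Mat n} (h : IsCMPair P) :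
    IsCMPair (scalePair u P) := by
  have h1 : ((u⁻¹ : ℂˣ) : ℂ) * (u : ℂ) = 1 := Units.inv_mul u
  have h2 : (u : ℂ) * ((u⁻¹ : ℂˣ) : ℂ) = 1 := Units.mul_inv u
  unfold IsCMPair scalePair at *
  dsimp only
  rw [smul_mul_smul_comm, smul_mul_smul_comm, h1, h2, one_smul, one_smul]
  exact h

lemma simConj_scalePair {n : ℕ} (u : ℂˣ) {P Q : Mat n × Mat n} (h : SimConj P Q) :
    SimConj (scalePair u P) (scalePair u Q) := by
  obtain ⟨A, h1, h2⟩ := h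
  exact ⟨A, by rw [scalePair, scalePair, h1, mul_smul_comm, smul_mul_assoc],
            by rw [scalePair, scalePair, h2, mul_smul_comm, smul_mul_assoc]⟩

/-- The scaling action `R_λ` on the Calogero–Moser space. -/
def ScaleCM {n : ℕ} (u : ℂˣ) : CMSpace n → CMSpace n :=
  @Quotient.map _ _ (CMSetoid n) (CMSetoid n)
    (fun P => ⟨scalePair u P.1, isCMPair_scalePair u P.2⟩)
    (fun _ _ h => simConj_scalePair u h)




lemma eval_charpoly' {m : ℕ} (M : Mat m) (z : ℂ) :
    (Matrix.charpoly M).eval z = det (z • (1 : Mat m) - M) := by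
  rw [Matrix.charpoly, ← Polynomial.coe_evalRingHom, RingHom.map_det]
  congr 1
  ext i j
  by_cases h : i = j <;>
    simp [h, charmatrix, Matrix.scalar, Matrix.one_apply, Matrix.diagonal_apply]

lemma isNilpotent_of_conj_smul {m : ℕ} (M : Mat m)
    (h : ∀ u : ℂˣ, ∃ A : (Mat m)ˣ, M = ↑A⁻¹ * ((u : ℂ) • M) * ↑A) :
    IsNilpotent M := by
  set p := Matrix.charpoly M with hp
  have key : ∀ (u : ℂˣ) (z : ℂ), p.eval z = (u : ℂ) ^ m * p.eval (((u : ℂ))⁻¹ * z) := by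
    intro u z
    obtain ⟨A, hA⟩ := h u
    have h1 : z • (1 : Mat m) - M = ↑A⁻¹ * (z • (1 : Mat m) - (u : ℂ) • M) * ↑A := by
      have hz : (↑A⁻¹ : Mat m) * (z • (1 : Mat m)) * ↑A = z • 1 := by
        rw [mul_smul_comm, smul_mul_assoc, mul_one, Units.inv_mul]
      rw [mul_sub, sub_mul, hz, ← hA]
    have h2 : z • (1 : Mat m) - (u : ℂ) • M
        = (u : ℂ) • ((((u : ℂ))⁻¹ * z) • (1 : Mat m) - M) := by
      rw [smul_sub, smul_smul, ← mul_assoc,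
        mul_inv_cancel₀ (Units.ne_zero u), one_mul]
    rw [eval_charpoly', eval_charpoly', h1, Matrix.det_units_conj', h2, Matrix.det_smul,
      Fintype.card_fin]
  have key2 : ∀ c : ℂ, c ≠ 0 → p.eval c = c ^ m * p.eval 1 := by
    intro c hc
    simpa [inv_mul_cancel₀ hc] using key (Units.mk0 c hc) c
  have hq : p - C (p.eval 1) * X ^ m = 0 := by
    apply Polynomial.eq_zero_of_infinite_isRoot
    apply Set.Infinite.mono (s := {c : ℂ | c ≠ 0})
    · intro c hc
      simp only [Set.mem_setOf_eq, IsRoot.def, eval_sub, eval_mul, eval_C, eval_pow, eval_X]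
      rw [key2 c hc]; ring
    · exact Set.Finite.infinite_compl (Set.finite_singleton (0:ℂ))
  have hpe : p = C (p.eval 1) * X ^ m := by linear_combination (norm := ring_nf) hq
  have hmon : p.coeff m = 1 := by
    have h1 := Matrix.charpoly_monic M
    have h2 := Matrix.charpoly_natDegree_eq_dim M
    rw [Fintype.card_fin] at h2
    have := h1.coeff_natDegree
    rwa [h2] at this
  have he1 : p.eval 1 = 1 := by
    have := congrArg (fun q => Polynomial.coeff q m) hpe
    simpa [hmon, coeff_C_mul, coeff_X_pow] using this.symm
  refine ⟨m, ?_⟩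
  have := Matrix.aeval_self_charpoly M
  rw [← hp, hpe, he1, Polynomial.C_1, one_mul, map_pow, aeval_X] at this
  exact this


/-- Diagonal unit with entries `u^i`. -/
def diagUnit {n : ℕ} (u : ℂˣ) : (Mat n)ˣ where
  val := Matrix.diagonal (fun i => (u : ℂ) ^ (i : ℕ))
  inv := Matrix.diagonal (fun i : Fin n => ((u : ℂ))⁻¹ ^ (i : ℕ))
  val_inv := by
    rw [Matrix.diagonal_mul_diagonal]
    convert Matrix.diagonal_one
    rw [← mul_pow, mul_inv_cancel₀ (Units.ne_zero u), one_pow]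
  inv_val := by
    rw [Matrix.diagonal_mul_diagonal]
    convert Matrix.diagonal_one
    rw [← mul_pow, inv_mul_cancel₀ (Units.ne_zero u), one_pow]

lemma scale_base_conj {n : ℕ} (u : ℂˣ) :
    SimConj (X0 n, Y0 n) (scalePair u (X0 n, Y0 n)) := by
  have hc : (u : ℂ) ≠ 0 := Units.ne_zero u
  have hinv : (↑(diagUnit (n := n) u)⁻¹ : Mat n) = Matrix.diagonal (fun i : Fin n => ((u : ℂ))⁻¹ ^ (i : ℕ)) := by rfl
  refine ⟨diagUnit u, ?_, ?_⟩
  · show ((u⁻¹ : ℂˣ) : ℂ) • X0 n = _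
    rw [hinv]
    ext i j
    show ((u⁻¹ : ℂˣ) : ℂ) * X0 n i j
        = (Matrix.diagonal (fun i : Fin n => ((u : ℂ))⁻¹ ^ (i : ℕ)) * X0 n * (↑(diagUnit (n := n) u) : Mat n)) i j
    rw [show (↑(diagUnit (n := n) u) : Mat n) = Matrix.diagonal (fun i : Fin n => (u : ℂ) ^ (i : ℕ)) from rfl,
      Matrix.mul_diagonal, Matrix.diagonal_mul, Units.val_inv_eq_inv_val]
    show (↑u : ℂ)⁻¹ * (if (i : ℕ) = (j : ℕ) + 1 then ((i : ℕ) : ℂ) else 0)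
        = (↑u : ℂ)⁻¹ ^ (i : ℕ) * (if (i : ℕ) = (j : ℕ) + 1 then ((i : ℕ) : ℂ) else 0)
            * (↑u : ℂ) ^ (j : ℕ)
    split_ifs with h
    · rw [h]
      field_simp
      rw [one_div, inv_pow, pow_succ]; field_simp
    · ring
  · show (u : ℂ) • Y0 n = _
    rw [hinv]
    ext i j
    show (u : ℂ) * Y0 n i j
        = (Matrix.diagonal (fun i : Fin n => ((u : ℂ))⁻¹ ^ (i : ℕ)) * Y0 n * (↑(diagUnit (n := n) u) : Mat n)) i j
    rw [show (↑(diagUnit (n := n) u) : Mat n) = Matrix.diagonal (fun i : Fin n => (u : ℂ) ^ (i : ℕ)) from rfl,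
      Matrix.mul_diagonal, Matrix.diagonal_mul]
    show (↑u : ℂ) * (if (j : ℕ) = (i : ℕ) + 1 then 1 else 0)
        = (↑u : ℂ)⁻¹ ^ (i : ℕ) * (if (j : ℕ) = (i : ℕ) + 1 then 1 else 0) * (↑u : ℂ) ^ (j : ℕ)
    split_ifs with h
    · rw [h]
      field_simp
      rw [one_div, inv_pow, pow_succ]; field_simp
    · ring


/-- If `f : C_n → C_m` commutes with all `Φ_p`, `Ψ_q` and all scalings `R_λ`, and
`f(X₀, Y₀) = (P, Q)`, then `P` and `Q` are nilpotent. -/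
theorem image_of_basepoint_nilpotent (n m : ℕ) (f : CMSpace n → CMSpace m)
    (hPhi : ∀ (p : ℂ[X]) (c : CMSpace n), f (Phi p c) = Phi p (f c))
    (hPsi : ∀ (q : ℂ[X]) (c : CMSpace n), f (Psi q c) = Psi q (f c))
    (hScale : ∀ (u : ℂˣ) (c : CMSpace n), f (ScaleCM u c) = ScaleCM u (f c))
    (h0 : IsCMPair (X0 n, Y0 n)) (P Q : Mat m) (hPQ : IsCMPair (P, Q))
    (hf : f (CMSpace.mk (X0 n, Y0 n) h0) = CMSpace.mk (P, Q) hPQ) :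
    IsNilpotent P ∧ IsNilpotent Q := by
  have hbase : ∀ u : ℂˣ, ScaleCM u (CMSpace.mk (X0 n, Y0 n) h0) = CMSpace.mk (X0 n, Y0 n) h0 := by
    intro u
    rw [CMSpace.mk, ScaleCM]
    show Quotient.mk (CMSetoid n) ⟨scalePair u (X0 n, Y0 n), isCMPair_scalePair u h0⟩ = _
    exact Quotient.sound (simConj_symm (scale_base_conj u))
  have hconj : ∀ u : ℂˣ, SimConj (scalePair u (P, Q)) (P, Q) := by
    intro u
    have h := hScale u (CMSpace.mk (X0 n, Y0 n) h0)
    rw [hbase u, hf, CMSpace.mk, ScaleCM] at h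
    change Quotient.mk (CMSetoid m) ⟨(P, Q), hPQ⟩ = Quotient.mk (CMSetoid m) ⟨scalePair u (P, Q), isCMPair_scalePair u hPQ⟩ at h
    exact simConj_symm (Quotient.exact h)
  constructor
  · apply isNilpotent_of_conj_smul
    intro u
    obtain ⟨A, h1, _⟩ := hconj u⁻¹
    refine ⟨A, ?_⟩
    simpa [scalePair] using h1
  · apply isNilpotent_of_conj_smul
    intro u
    obtain ⟨A, _, h2⟩ := hconj u
    exact ⟨A, h2⟩

end
end

section
/- Let n ≥ 3, let a = (a_1, …, a_{n−1}) ∈ ℂ^{n−1}, let X(a) be the n×n matrix with (i+1,i)-entry a_i for i = 1,…,n−1 and all other entries 0, and let Y_0 be the n×n matrix with (i,i+1)-entry 1 for i = 1,…,n−1 and all other entries 0. Then det(tI − X(a) − Y_0^{n−2}) = t^n − (a_1 a_2 ⋯ a_{n−2} + a_2 a_3 ⋯ a_{n−1}) t. -/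
open Matrix Polynomial

noncomputable section

lemma Y0_pow_apply (n k : ℕ) (i j : Fin n) :
    (Y0 n ^ k) i j = if (j : ℕ) = (i : ℕ) + k then 1 else 0 := by
  induction k generalizing j with
  | zero => simp [Matrix.one_apply, Fin.ext_iff, eq_comm]
  | succ k IH =>
    rw [pow_succ, Matrix.mul_apply]
    simp only [IH, ite_mul, one_mul, zero_mul]
    by_cases hik : (i : ℕ) + k < n
    · have : ∀ l : Fin n, ((l : ℕ) = (i : ℕ) + k) ↔ l = ⟨(i : ℕ) + k, hik⟩ := by
        intro l; simp [Fin.ext_iff]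
      simp only [this]
      rw [Finset.sum_ite_eq' Finset.univ _ (fun l => Y0 n l j)]
      simp [Y0, ← add_assoc]
    · have h1 : ∀ l : Fin n, ¬ ((l : ℕ) = (i : ℕ) + k) := fun l h => hik (h ▸ l.is_lt)
      have h2 : ¬ ((j : ℕ) = (i : ℕ) + (k + 1)) := by
        intro h; exact hik (by omega)
      simp [h1, h2]

lemma M_apply (m : ℕ) (a : ℕ → ℂ) (i j : Fin (m + 3)) :
    (subd (m + 3) a + Y0 (m + 3) ^ (m + 1)) i j =
      (if (i : ℕ) = (j : ℕ) + 1 then a i else 0)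
        + (if (j : ℕ) = (i : ℕ) + (m + 1) then 1 else 0) := by
  simp [subd, Y0_pow_apply, Matrix.add_apply]

lemma sigma2_val (m : ℕ) (i : Fin (m + 3)) :
    ((Equiv.swap (0 : Fin (m + 3)) 1 * finRotate (m + 3)) i : ℕ) =
      if (i : ℕ) = 0 then 0 else if (i : ℕ) = m + 2 then 1 else (i : ℕ) + 1 := by
  rw [Equiv.Perm.mul_apply, finRotate_succ_apply]
  rcases Nat.lt_trichotomy (i : ℕ) (m + 2) with hi | hi | hi
  · rcases Nat.eq_zero_or_pos (i : ℕ) with hi0 | hipos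
    · have : i = 0 := Fin.ext (by simpa using hi0)
      rw [this]
      norm_num
    · have hne : i ≠ Fin.last (m + 2) := by
        intro hcon; rw [hcon] at hi; simp [Fin.last] at hi
      have hval : ((i + 1 : Fin (m + 3)) : ℕ) = (i : ℕ) + 1 := by
        rw [Fin.val_add_one]; simp [hne]
      have hne0 : (i + 1 : Fin (m + 3)) ≠ 0 := by
        intro hcon
        have := congrArg Fin.val hcon
        rw [hval] at this; simp at this
      have hne1 : (i + 1 : Fin (m + 3)) ≠ 1 := by
        intro hcon
        have := congrArg Fin.val hcon
        rw [hval] at this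
        have h1v : ((1 : Fin (m + 3)) : ℕ) = 1 := rfl
        omega
      rw [Equiv.swap_apply_of_ne_of_ne hne0 hne1, hval]
      have : ¬ ((i : ℕ) = 0) := by omega
      simp [this, Nat.ne_of_lt hi]
  · have hlast : i = Fin.last (m + 2) := Fin.ext (by simpa [Fin.last] using hi)
    have : (i + 1 : Fin (m + 3)) = 0 := by
      rw [hlast]; exact Fin.last_add_one _
    rw [this, Equiv.swap_apply_left]
    have h1v : ((1 : Fin (m + 3)) : ℕ) = 1 := rfl
    rw [h1v, hi]
    simp
  · exfalso; have := i.is_lt; omega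

lemma classify (m : ℕ) (σ : Equiv.Perm (Fin (m + 3)))
    (h : ∀ i : Fin (m + 3), (σ i : ℕ) = (i : ℕ) ∨ (σ i : ℕ) = (i : ℕ) + 1 ∨
        (i : ℕ) = (σ i : ℕ) + (m + 1)) :
    σ = 1 ∨ σ = Fin.cycleRange ⟨m + 1, by omega⟩ ∨
      σ = Equiv.swap 0 1 * finRotate (m + 3) := by
  have hm3 : 0 < m + 3 := by omega
  set f : ℕ → ℕ := fun k => (σ ⟨k % (m + 3), Nat.mod_lt _ hm3⟩ : ℕ) with hfdef
  have hfval : ∀ i : Fin (m + 3), (σ i : ℕ) = f (i : ℕ) := by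
    intro i
    simp [hfdef, Nat.mod_eq_of_lt i.is_lt]
  have hf : ∀ k, k < m + 3 → (f k = k ∨ f k = k + 1 ∨ k = f k + (m + 1)) := by
    intro k hk
    have := h ⟨k, hk⟩
    rwa [hfval ⟨k, hk⟩] at this
  have hflt : ∀ k, f k < m + 3 := fun k => Fin.is_lt _
  have hfinj : ∀ k l, k < m + 3 → l < m + 3 → f k = f l → k = l := by
    intro k l hk hl hkl
    have := σ.injective (Fin.ext hkl : σ ⟨k % (m+3), _⟩ = σ ⟨l % (m+3), _⟩)
    have := congrArg Fin.val this
    simpa [Nat.mod_eq_of_lt hk, Nat.mod_eq_of_lt hl] using this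
  rcases hf (m + 2) (by omega) with h2 | h2 | h2
  · -- f (m+2) = m+2
    rcases hf (m + 1) (by omega) with h1 | h1 | h1
    · -- f (m+1) = m+1 : identity
      left
      have hdown : ∀ k, k ≤ m + 1 → f (m + 1 - k) = m + 1 - k := by
        intro k
        induction k with
        | zero => intro _; simpa using h1
        | succ k IH =>
          intro hk
          have IH' := IH (by omega)
          have hj : m + 1 - (k + 1) = m - k := by omega
          rw [hj]
          rcases hf (m - k) (by omega) with hx | hx | hx
          · exact hx
          · exfalso
            have : m - k + 1 = m + 1 - k := by omega
            rw [this, ← IH'] at hx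
            have := hfinj _ _ (by omega) (by omega) hx
            omega
          · omega
      have hall : ∀ k, k ≤ m + 1 → f k = k := by
        intro k hk
        have := hdown (m + 1 - k) (by omega)
        have hkk : m + 1 - (m + 1 - k) = k := by omega
        rwa [hkk] at this
      apply Equiv.ext; intro i; apply Fin.ext
      rw [hfval i]
      show f (i : ℕ) = (i : ℕ)
      rcases Nat.lt_or_ge (i : ℕ) (m + 2) with hi | hi
      · exact hall _ (by omega)
      · have : (i : ℕ) = m + 2 := by have := i.is_lt; omega
        rw [this]; exact h2
    · -- f (m+1) = m+2 : contradiction with f (m+2) = m+2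
      exfalso
      have := hfinj (m + 1) (m + 2) (by omega) (by omega) (by omega)
      omega
    · -- m+1 = f (m+1) + m + 1, so f (m+1) = 0 : cycleRange case
      have h1' : f (m + 1) = 0 := by omega
      right; left
      have hmid : ∀ k, k ≤ m → f k = k + 1 := by
        intro k
        induction k using Nat.strong_induction_on with
        | _ k IH =>
          intro hk
          rcases hf k (by omega) with hx | hx | hx
          · exfalso
            rcases Nat.eq_zero_or_pos k with rfl | hpos
            · have : f 0 = f (m + 1) := by omega
              have := hfinj _ _ (by omega) (by omega) this
              omega
            · have := IH (k - 1) (by omega) (by omega)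
              have heq : f (k - 1) = f k := by omega
              have := hfinj _ _ (by omega) (by omega) heq
              omega
          · exact hx
          · omega
      apply Equiv.ext; intro i; apply Fin.ext
      rw [hfval i]
      set t : Fin (m + 3) := ⟨m + 1, by omega⟩ with ht
      rcases Nat.lt_trichotomy (i : ℕ) (m + 1) with hi | hi | hi
      · have hlt : i < t := hi
        rw [Fin.cycleRange_of_lt hlt]
        have : ((i + 1 : Fin (m + 3)) : ℕ) = (i : ℕ) + 1 := by
          rw [Fin.val_add_one]
          have : i ≠ Fin.last (m + 2) := by
            intro hcon; rw [hcon] at hi; simp [Fin.last] at hi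
          simp [this]
        rw [this]
        exact hmid _ (by omega)
      · have : i = t := Fin.ext hi
        rw [this, Fin.cycleRange_self]
        simpa [hi] using h1'
      · have hgt : t < i := hi
        rw [Fin.cycleRange_of_gt hgt]
        have : (i : ℕ) = m + 2 := by have := i.is_lt; omega
        rw [this]; exact h2
  · have := hflt (m + 2); omega  -- f (m+2) = m+3 impossible
  · -- m+2 = f (m+2) + m+1, so f (m+2) = 1 : swap*rotate case
    have h2' : f (m + 2) = 1 := by omega
    right; right
    have h0 : f 0 = 0 := by
      rcases hf 0 (by omega) with hx | hx | hx
      · exact hx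
      · exfalso
        have : f 0 = f (m + 2) := by omega
        have := hfinj _ _ (by omega) (by omega) this
        omega
      · omega
    have hmid : ∀ k, 1 ≤ k → k ≤ m + 1 → f k = k + 1 := by
      intro k
      induction k using Nat.strong_induction_on with
      | _ k IH =>
        intro h1k h2k
        rcases hf k (by omega) with hx | hx | hx
        · exfalso
          rcases Nat.eq_or_lt_of_le h1k with h1k' | h1k'
          · have : f k = f (m + 2) := by omega
            have := hfinj _ _ (by omega) (by omega) this
            omega
          · have := IH (k - 1) (by omega) (by omega) (by omega)
            have heq : f (k - 1) = f k := by omega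
            have := hfinj _ _ (by omega) (by omega) heq
            omega
        · exact hx
        · exfalso
          have hk0 : f k = 0 := by omega
          have : f k = f 0 := by omega
          have := hfinj _ _ (by omega) (by omega) this
          omega
    apply Equiv.ext; intro i; apply Fin.ext
    rw [hfval i]
    rw [Equiv.Perm.mul_apply, finRotate_succ_apply]
    rcases Nat.lt_trichotomy (i : ℕ) (m + 2) with hi | hi | hi
    · rcases Nat.eq_zero_or_pos (i : ℕ) with hi0 | hipos
      · have : i = 0 := Fin.ext (by simpa using hi0)
        rw [this]
        norm_num
        simpa [hi0] using h0
      · have hne : i ≠ Fin.last (m + 2) := by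
          intro hcon; rw [hcon] at hi; simp [Fin.last] at hi
        have hval : ((i + 1 : Fin (m + 3)) : ℕ) = (i : ℕ) + 1 := by
          rw [Fin.val_add_one]; simp [hne]
        have hne0 : (i + 1 : Fin (m + 3)) ≠ 0 := by
          intro hcon
          have := congrArg Fin.val hcon
          rw [hval] at this; simp at this
        have hne1 : (i + 1 : Fin (m + 3)) ≠ 1 := by
          intro hcon
          have := congrArg Fin.val hcon
          rw [hval] at this
          have h1v : ((1 : Fin (m + 3)) : ℕ) = 1 := rfl
          omega
        rw [Equiv.swap_apply_of_ne_of_ne hne0 hne1, hval]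
        exact hmid _ (by omega) (by omega)
    · have hlast : i = Fin.last (m + 2) := Fin.ext (by simpa [Fin.last] using hi)
      have : (i + 1 : Fin (m + 3)) = 0 := by
        rw [hlast]; exact Fin.last_add_one _
      rw [this, Equiv.swap_apply_left]
      have h1v : ((1 : Fin (m + 3)) : ℕ) = 1 := rfl
      rw [h1v, hi]
      exact h2'
    · exfalso; have := i.is_lt; omega

-- helper: product of negated C's
lemma prod_neg_C (m : ℕ) (b : ℕ → ℂ) :
    (∏ i : Fin (m + 1), -Polynomial.C (b (i : ℕ))) =
      (-1) ^ (m + 1) * Polynomial.C (∏ i ∈ Finset.range (m + 1), b i) := by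
  have : ∀ i : Fin (m + 1), -Polynomial.C (b (i : ℕ)) = (-1) * Polynomial.C (b (i : ℕ)) := by
    intro i; ring
  rw [Finset.prod_congr rfl (fun i _ => this i), Finset.prod_mul_distrib,
    Finset.prod_const, Finset.card_univ, Fintype.card_fin, ← map_prod,
    Fin.prod_univ_eq_prod_range (fun i => b i)]

lemma Icc_prod_eq₁ (m : ℕ) (a : ℕ → ℂ) :
    ∏ i ∈ Finset.Icc 1 (m + 1), a i = ∏ i ∈ Finset.range (m + 1), a (i + 1) := by
  rw [← Finset.Ico_add_one_right_eq_Icc, Finset.prod_Ico_eq_prod_range]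
  simp [add_comm]

lemma Icc_prod_eq₂ (m : ℕ) (a : ℕ → ℂ) :
    ∏ i ∈ Finset.Icc 2 (m + 2), a i = ∏ i ∈ Finset.range (m + 1), a (i + 2) := by
  rw [← Finset.Ico_add_one_right_eq_Icc, Finset.prod_Ico_eq_prod_range]
  apply Finset.prod_congr
  · congr 1
  · intro x _; rw [add_comm]

/-- `det(tI - X(a) - Y₀^{n-2}) = tⁿ - (a₁ ⋯ a_{n-2} + a₂ ⋯ a_{n-1}) t` for `n ≥ 3`. -/
theorem charpoly_subd_add_pow_pred_pred (n : ℕ) (hn : 3 ≤ n) (a : ℕ → ℂ) :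
    (subd n a + Y0 n ^ (n - 2)).charpoly =
      Polynomial.X ^ n -
        Polynomial.C (∏ i ∈ Finset.Icc 1 (n - 2), a i + ∏ i ∈ Finset.Icc 2 (n - 1), a i) *
          Polynomial.X := by
  obtain ⟨m, rfl⟩ : ∃ m, n = m + 3 := ⟨n - 3, by omega⟩
  have e2 : m + 3 - 2 = m + 1 := by omega
  have e1 : m + 3 - 1 = m + 2 := by omega
  rw [e2, e1]
  set M : Mat (m + 3) := subd (m + 3) a + Y0 (m + 3) ^ (m + 1) with hMdef
  set A := charmatrix M with hAdef
  -- entry lemmas for A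
  have hAdiag : ∀ i : Fin (m + 3), A i i = X := by
    intro i
    rw [hAdef, Matrix.charmatrix_apply_eq, hMdef, M_apply]
    have h1 : ¬ ((i : ℕ) = (i : ℕ) + 1) := by omega
    have h2 : ¬ ((i : ℕ) = (i : ℕ) + (m + 1)) := by omega
    simp [h1, h2]
  have hAsub : ∀ u v : Fin (m + 3), (u : ℕ) = (v : ℕ) + 1 →
      A u v = -Polynomial.C (a (u : ℕ)) := by
    intro u v huv
    have hne : u ≠ v := by intro h; rw [h] at huv; omega
    rw [hAdef, Matrix.charmatrix_apply_ne _ _ _ hne, hMdef, M_apply]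
    have h2 : ¬ ((v : ℕ) = (v : ℕ) + 1 + (m + 1)) := by omega
    simp [huv, h2]
  have hAjump : ∀ u v : Fin (m + 3), (v : ℕ) = (u : ℕ) + (m + 1) →
      A u v = -1 := by
    intro u v huv
    have hne : u ≠ v := by
      intro h; rw [h] at huv; omega
    rw [hAdef, Matrix.charmatrix_apply_ne _ _ _ hne, hMdef, M_apply]
    have h1 : ¬ ((u : ℕ) = (u : ℕ) + (m + 1) + 1) := by omega
    simp [huv, h1]
  have hAzero : ∀ u v : Fin (m + 3), u ≠ v → ¬ ((u : ℕ) = (v : ℕ) + 1) →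
      ¬ ((v : ℕ) = (u : ℕ) + (m + 1)) → A u v = 0 := by
    intro u v hne h1 h2
    rw [hAdef, Matrix.charmatrix_apply_ne _ _ _ hne, hMdef, M_apply]
    simp [h1, h2]
  set t1 : Fin (m + 3) := ⟨m + 1, by omega⟩ with ht1
  set σ1 : Equiv.Perm (Fin (m + 3)) := Fin.cycleRange t1 with hσ1
  set σ2 : Equiv.Perm (Fin (m + 3)) := Equiv.swap (0 : Fin (m + 3)) 1 * finRotate (m + 3)
    with hσ2
  have hσ1val : ∀ i : Fin (m + 3), (σ1 i : ℕ) =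
      if (i : ℕ) < m + 1 then (i : ℕ) + 1 else if (i : ℕ) = m + 1 then 0 else (i : ℕ) := by
    intro i
    rcases Nat.lt_trichotomy (i : ℕ) (m + 1) with hi | hi | hi
    · have hlt : i < t1 := by rw [Fin.lt_def]; exact hi
      rw [hσ1, Fin.cycleRange_of_lt hlt, Fin.val_add_one]
      have : i ≠ Fin.last (m + 2) := by
        intro hcon; rw [hcon] at hi; simp [Fin.last] at hi
      simp [this, hi]
    · have : i = t1 := Fin.ext hi
      rw [hσ1, this, Fin.cycleRange_self]
      simp [hi, ht1]
    · have hgt : t1 < i := by rw [Fin.lt_def]; exact hi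
      rw [hσ1, Fin.cycleRange_of_gt hgt]
      have h1 : ¬ ((i : ℕ) < m + 1) := by omega
      have h2 : ¬ ((i : ℕ) = m + 1) := by omega
      simp [h1, h2]
  have hσ2val : ∀ i : Fin (m + 3), (σ2 i : ℕ) =
      if (i : ℕ) = 0 then 0 else if (i : ℕ) = m + 2 then 1 else (i : ℕ) + 1 := by
    simp only [hσ2]; exact sigma2_val m
  -- determinant expansion
  show (charmatrix M).det = _
  rw [Matrix.det_apply']
  -- restrict the sum to the three permutations
  have hsupp : ∀ σ : Equiv.Perm (Fin (m + 3)),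
      σ ∉ ({1, σ1, σ2} : Finset (Equiv.Perm (Fin (m + 3)))) →
      (((Equiv.Perm.sign σ : ℤ) : ℂ[X]) * ∏ i, A (σ i) i) = 0 := by
    intro σ hσ
    simp only [Finset.mem_insert, Finset.mem_singleton, not_or] at hσ
    obtain ⟨hne1, hne2, hne3⟩ := hσ
    by_cases hz : (∏ i, A (σ i) i) = 0
    · rw [hz, mul_zero]
    exfalso
    have hfac : ∀ i : Fin (m + 3), A (σ i) i ≠ 0 := by
      intro i
      exact Finset.prod_ne_zero_iff.mp hz i (Finset.mem_univ i)
    have hcond : ∀ i : Fin (m + 3), (σ i : ℕ) = (i : ℕ) ∨ (σ i : ℕ) = (i : ℕ) + 1 ∨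
        (i : ℕ) = (σ i : ℕ) + (m + 1) := by
      intro i
      by_cases heq : σ i = i
      · left; rw [heq]
      by_cases h1 : (σ i : ℕ) = (i : ℕ) + 1
      · right; left; exact h1
      by_cases h2 : (i : ℕ) = (σ i : ℕ) + (m + 1)
      · right; right; exact h2
      exact absurd (hAzero _ _ heq h1 h2) (hfac i)
    rcases classify m σ hcond with h | h | h
    · exact hne1 h
    · exact hne2 (by rw [h])
    · exact hne3 (by rw [h])
  have htv : (t1 : ℕ) = m + 1 := rfl
  have h0v : ((0 : Fin (m + 3)) : ℕ) = 0 := rfl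
  have hd12 : (1 : Equiv.Perm (Fin (m + 3))) ≠ σ1 := by
    intro h
    have h0 : ((1 : Equiv.Perm (Fin (m + 3))) t1 : ℕ) = (σ1 t1 : ℕ) := by rw [h]
    rw [Equiv.Perm.one_apply, hσ1val t1, htv] at h0
    split_ifs at h0 <;> omega
  have hd13 : (1 : Equiv.Perm (Fin (m + 3))) ≠ σ2 := by
    intro h
    have h0 : ((1 : Equiv.Perm (Fin (m + 3))) t1 : ℕ) = (σ2 t1 : ℕ) := by rw [h]
    rw [Equiv.Perm.one_apply, hσ2val t1, htv] at h0
    split_ifs at h0 <;> omega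
  have hd23 : σ1 ≠ σ2 := by
    intro h
    have h0 : (σ1 (0 : Fin (m + 3)) : ℕ) = (σ2 0 : ℕ) := by rw [h]
    rw [hσ1val 0, hσ2val 0, h0v] at h0
    split_ifs at h0 <;> omega
  rw [← Finset.sum_subset (Finset.subset_univ ({1, σ1, σ2} : Finset (Equiv.Perm (Fin (m + 3)))))
    (fun σ _ hσ => hsupp σ hσ)]
  rw [Finset.sum_insert (by simp [hd12, hd13]),
    Finset.sum_insert (by simp [hd23]), Finset.sum_singleton]
  -- term for the identity
  have hterm1 : (((Equiv.Perm.sign (1 : Equiv.Perm (Fin (m + 3))) : ℤ) : ℂ[X]) *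
      ∏ i, A ((1 : Equiv.Perm (Fin (m + 3))) i) i) = X ^ (m + 3) := by
    simp only [Equiv.Perm.sign_one, Equiv.Perm.one_apply]
    rw [Finset.prod_congr rfl (fun i _ => hAdiag i), Finset.prod_const,
      Finset.card_univ, Fintype.card_fin]
    simp
  -- term for σ1
  have hsign1 : ((Equiv.Perm.sign σ1 : ℤ) : ℂ[X]) = (-1) ^ (m + 1) := by
    rw [hσ1, Fin.sign_cycleRange]
    have : (t1 : ℕ) = m + 1 := rfl
    rw [this]
    push_cast
    norm_num
  have hprod1 : (∏ i, A (σ1 i) i) =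
      ((-1) ^ (m + 1) * Polynomial.C (∏ i ∈ Finset.Icc 1 (m + 1), a i)) * (-1) * X := by
    rw [Fin.prod_univ_castSucc (fun i => A (σ1 i) i),
      Fin.prod_univ_castSucc (fun i : Fin (m + 2) => A (σ1 i.castSucc) i.castSucc)]
    have hlastval : ((Fin.last (m + 2) : Fin (m + 3)) : ℕ) = m + 2 := rfl
    have hlast : A (σ1 (Fin.last (m + 2))) (Fin.last (m + 2)) = X := by
      have hv : (σ1 (Fin.last (m + 2)) : ℕ) = m + 2 := by
        rw [hσ1val]; simp [hlastval]
      have : σ1 (Fin.last (m + 2)) = Fin.last (m + 2) := Fin.ext (by rw [hv, hlastval])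
      rw [this]; exact hAdiag _
    have hmidval : (((Fin.last (m + 1)).castSucc : Fin (m + 3)) : ℕ) = m + 1 := rfl
    have hmid : A (σ1 ((Fin.last (m + 1)).castSucc)) ((Fin.last (m + 1)).castSucc) = -1 := by
      have hv : (σ1 ((Fin.last (m + 1)).castSucc) : ℕ) = 0 := by
        rw [hσ1val]; simp [hmidval]
      apply hAjump
      rw [hv, hmidval]
      omega
    have hfront : ∀ i : Fin (m + 1),
        A (σ1 (i.castSucc.castSucc)) (i.castSucc.castSucc) = -Polynomial.C (a ((i : ℕ) + 1)) := by
      intro i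
      have hjval : ((i.castSucc.castSucc : Fin (m + 3)) : ℕ) = (i : ℕ) := rfl
      have hv : (σ1 (i.castSucc.castSucc) : ℕ) = (i : ℕ) + 1 := by
        rw [hσ1val, hjval]
        have := i.is_lt
        rw [if_pos this]
      rw [hAsub _ _ (by rw [hv, hjval]), hv]
    rw [Finset.prod_congr rfl (fun i _ => hfront i), hlast, hmid,
      prod_neg_C m (fun k => a (k + 1)), Icc_prod_eq₁ m a]
  -- term for σ2
  have hsign2 : ((Equiv.Perm.sign σ2 : ℤ) : ℂ[X]) = (-1) ^ (m + 1) := by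
    rw [hσ2, Equiv.Perm.sign_mul, Equiv.Perm.sign_swap (by
      intro h
      have := congrArg Fin.val h
      simpa using this), sign_finRotate]
    push_cast
    have : (-1 : ℂ[X]) * (-1) ^ (m + 2) = (-1) ^ (m + 3) := by ring
    rw [this, pow_succ, pow_succ]
    ring
  have hprod2 : (∏ i, A (σ2 i) i) =
      ((-1) ^ (m + 1) * Polynomial.C (∏ i ∈ Finset.Icc 2 (m + 2), a i)) * (-1) * X := by
    rw [Fin.prod_univ_succ (fun i => A (σ2 i) i),
      Fin.prod_univ_castSucc (fun i : Fin (m + 2) => A (σ2 i.succ) i.succ)]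
    have hz : A (σ2 0) 0 = X := by
      have hv : (σ2 (0 : Fin (m + 3)) : ℕ) = 0 := by rw [hσ2val]; simp
      have : σ2 0 = 0 := Fin.ext (by rw [hv]; simp)
      rw [this]; exact hAdiag _
    have hlastval : (((Fin.last (m + 1)).succ : Fin (m + 3)) : ℕ) = m + 2 := rfl
    have hlast : A (σ2 ((Fin.last (m + 1)).succ)) ((Fin.last (m + 1)).succ) = -1 := by
      have hv : (σ2 ((Fin.last (m + 1)).succ) : ℕ) = 1 := by
        rw [hσ2val, hlastval]; simp
      apply hAjump
      rw [hv, hlastval]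
      omega
    have hfront : ∀ i : Fin (m + 1),
        A (σ2 (i.castSucc.succ)) (i.castSucc.succ) = -Polynomial.C (a ((i : ℕ) + 2)) := by
      intro i
      have hjval : ((i.castSucc.succ : Fin (m + 3)) : ℕ) = (i : ℕ) + 1 := rfl
      have hne0 : ¬ (((i.castSucc.succ : Fin (m + 3)) : ℕ) = 0) := by rw [hjval]; omega
      have hnel : ¬ (((i.castSucc.succ : Fin (m + 3)) : ℕ) = m + 2) := by
        rw [hjval]; have := i.is_lt; omega
      have hv : (σ2 (i.castSucc.succ) : ℕ) = (i : ℕ) + 2 := by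
        rw [hσ2val]
        simp only [hne0, hnel, if_false]
        rw [hjval]
      rw [hAsub _ _ (by rw [hv, hjval]), hv]
    rw [Finset.prod_congr rfl (fun i _ => hfront i), hz, hlast,
      prod_neg_C m (fun k => a (k + 2)), Icc_prod_eq₂ m a]
    ring
  rw [hterm1, hsign1, hprod1, hsign2, hprod2]
  have hpow : ((-1 : ℂ[X]) ^ (m + 1)) * ((-1) ^ (m + 1)) = 1 := by
    rw [← pow_add]
    exact Even.neg_one_pow ⟨m + 1, by ring⟩
  rw [map_add]
  calc X ^ (m + 3) +
      ((-1 : ℂ[X]) ^ (m + 1) * ((-1) ^ (m + 1) * Polynomial.C (∏ i ∈ Finset.Icc 1 (m + 1), a i) * (-1) * X) +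
        (-1 : ℂ[X]) ^ (m + 1) * ((-1) ^ (m + 1) * Polynomial.C (∏ i ∈ Finset.Icc 2 (m + 2), a i) * (-1) * X))
      = X ^ (m + 3) +
        (((-1 : ℂ[X]) ^ (m + 1) * (-1) ^ (m + 1)) * (Polynomial.C (∏ i ∈ Finset.Icc 1 (m + 1), a i) * (-1) * X) +
          ((-1 : ℂ[X]) ^ (m + 1) * (-1) ^ (m + 1)) * (Polynomial.C (∏ i ∈ Finset.Icc 2 (m + 2), a i) * (-1) * X)) := by
        ring
    _ = X ^ (m + 3) -
        (Polynomial.C (∏ i ∈ Finset.Icc 1 (m + 1), a i) +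
          Polynomial.C (∏ i ∈ Finset.Icc 2 (m + 2), a i)) * X := by
        rw [hpow]; ring

end
end

section
/- Let n ≥ 3, let 1 < r < n, and let a = (1, 2, …, r−1, −(n−r), …, −2, −1) ∈ ℂ^{n−1}. Then the pair (X(a) + Y_0^{n−2}, Y_0) is simultaneously conjugate to the pair (X(a), Y_0); in particular X(a) + Y_0^{n−2} is nilpotent. -/
open Matrix Polynomial

noncomputable section

lemma Y0_pow_eq_zero {n k : ℕ} (h : n ≤ k) : Y0 n ^ k = 0 := by
  ext i j
  rw [Y0_pow_apply, Matrix.zero_apply, if_neg]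
  have := j.isLt; omega

lemma subd_mul_apply (n : ℕ) (a : ℕ → ℂ) (M : Mat n) (i j : Fin n) :
    (subd n a * M) i j =
      if h : 0 < (i : ℕ) then a i * M ⟨(i : ℕ) - 1, by omega⟩ j else 0 := by
  rw [mul_apply]
  split_ifs with h
  · rw [Finset.sum_eq_single (⟨(i : ℕ) - 1, by omega⟩ : Fin n)]
    · rw [subd, of_apply, if_pos (by simp; omega)]
    · intro m _ hm
      rw [subd, of_apply, if_neg, zero_mul]
      intro hc
      exact hm (Fin.ext (show (m : ℕ) = (i : ℕ) - 1 by omega))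
    · intro hc; exact absurd (Finset.mem_univ _) hc
  · rw [Finset.sum_eq_zero]
    intro m _
    rw [subd, of_apply, if_neg (by omega), zero_mul]

lemma mul_subd_apply (n : ℕ) (a : ℕ → ℂ) (M : Mat n) (i j : Fin n) :
    (M * subd n a) i j =
      if h : (j : ℕ) + 1 < n then M i ⟨(j : ℕ) + 1, h⟩ * a ((j : ℕ) + 1) else 0 := by
  rw [mul_apply]
  split_ifs with h
  · rw [Finset.sum_eq_single (⟨(j : ℕ) + 1, h⟩ : Fin n)]
    · rw [subd, of_apply, if_pos (by simp)]
    · intro m _ hm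
      rw [subd, of_apply, if_neg, mul_zero]
      intro hc
      exact hm (Fin.ext (show (m : ℕ) = (j : ℕ) + 1 from hc))
    · intro hc; exact absurd (Finset.mem_univ _) hc
  · rw [Finset.sum_eq_zero]
    intro m _
    rw [subd, of_apply, if_neg, mul_zero]
    have := m.isLt; omega

lemma subd_pow_apply (n : ℕ) (a : ℕ → ℂ) (k : ℕ) (i j : Fin n)
    (h : (i : ℕ) < (j : ℕ) + k) : (subd n a ^ k) i j = 0 := by
  induction k generalizing i with
  | zero =>
    rw [pow_zero, one_apply, if_neg]
    intro hc; rw [hc] at h; omega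
  | succ k ih =>
    rw [pow_succ', subd_mul_apply]
    split_ifs with h0
    · rw [ih ⟨(i : ℕ) - 1, by omega⟩ (by simp only [Fin.val_mk]; omega), mul_zero]
    · rfl

lemma subd_pow_n (n : ℕ) (a : ℕ → ℂ) : subd n a ^ n = 0 := by
  ext i j
  rw [subd_pow_apply n a n i j (by have := i.isLt; omega), Matrix.zero_apply]

lemma key_comm (n r : ℕ) (hn : 3 ≤ n) (hr1 : 1 < r) (hr2 : r < n) :
    subd n (avec n r) * Y0 n ^ (n - 1) - Y0 n ^ (n - 1) * subd n (avec n r)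
      = Y0 n ^ (n - 2) := by
  ext i j
  have hi := i.isLt
  have hj := j.isLt
  rw [Matrix.sub_apply, subd_mul_apply, mul_subd_apply]
  simp only [Y0_pow_apply, Fin.val_mk]
  by_cases h1 : (i : ℕ) = 1 ∧ (j : ℕ) = n - 1
  · obtain ⟨hi1, hj1⟩ := h1
    rw [dif_pos (by omega), if_pos (by omega), dif_neg (by omega),
      if_pos (by omega), hi1]
    simp only [avec]
    rw [if_pos hr1]
    norm_num
  · by_cases h2 : (i : ℕ) = 0 ∧ (j : ℕ) = n - 2
    · obtain ⟨hi2, hj2⟩ := h2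
      rw [dif_neg (by omega), dif_pos (by omega), if_pos (by omega),
        if_pos (by omega)]
      simp only [avec]
      rw [if_neg (by omega)]
      have hc : ((j : ℕ) : ℂ) = (n : ℂ) - 2 := by
        rw [hj2, Nat.cast_sub (by omega)]
        norm_num
      push_cast
      rw [hc]
      ring
    · rw [if_neg (by omega)]
      have e1 : (if h : 0 < (i : ℕ) then
          avec n r ↑i * (if (j : ℕ) = (i : ℕ) - 1 + (n - 1) then (1:ℂ) else 0)
          else 0) = 0 := by
        split_ifs with h0 hin
        · omega
        · rw [mul_zero]
        · rfl
      have e2 : (if h : (j : ℕ) + 1 < n then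
          (if (j : ℕ) + 1 = (i : ℕ) + (n - 1) then (1:ℂ) else 0) * avec n r ((j:ℕ)+1)
          else 0) = 0 := by
        split_ifs with h0 hin
        · omega
        · rw [zero_mul]
        · rfl
      rw [e1, e2, sub_zero]


/-- For `1 < r < n`, the pair `(X(a(r)) + Y₀^{n-2}, Y₀)` is simultaneously conjugate to
`(X(a(r)), Y₀)`; in particular `X(a(r)) + Y₀^{n-2}` is nilpotent. -/
theorem middle_points_fixed (n r : ℕ) (hn : 3 ≤ n) (hr1 : 1 < r) (hr2 : r < n) :
    SimConj (subd n (avec n r) + Y0 n ^ (n - 2), Y0 n) (subd n (avec n r), Y0 n) ∧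
    IsNilpotent (subd n (avec n r) + Y0 n ^ (n - 2)) := by
  set X := subd n (avec n r) with hX
  set N := Y0 n ^ (n - 1) with hN
  set C := Y0 n ^ (n - 2) with hC
  have hNN : N * N = 0 := by rw [hN, ← pow_add]; exact Y0_pow_eq_zero (by omega)
  have hCN : C * N = 0 := by rw [hC, hN, ← pow_add]; exact Y0_pow_eq_zero (by omega)
  have hkey : X * N - N * X = C := key_comm n r hn hr1 hr2
  have hval : (1 - N) * (1 + N) = 1 := by
    have : (1 - N) * (1 + N) = 1 - N * N := by noncomm_ring
    rw [this, hNN, sub_zero]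
  have hinv : (1 + N) * (1 - N) = 1 := by
    have : (1 + N) * (1 - N) = 1 - N * N := by noncomm_ring
    rw [this, hNN, sub_zero]
  set A : (Mat n)ˣ := ⟨1 - N, 1 + N, hval, hinv⟩ with hA
  have hAval : (↑A : Mat n) = 1 - N := rfl
  have hAinv : (↑A⁻¹ : Mat n) = 1 + N := rfl
  have h1 : (X + C) * (1 - N) = (1 - N) * X := by
    have e1 : (X + C) * (1 - N) = X + C - (X * N + C * N) := by noncomm_ring
    rw [e1, hCN, add_zero, ← hkey]
    noncomm_ring
  have hA1 : X = ↑A⁻¹ * (X + C) * ↑A := by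
    rw [hAval, hAinv, mul_assoc, h1, ← mul_assoc, hinv, one_mul]
  have hA2 : Y0 n = ↑A⁻¹ * Y0 n * ↑A := by
    have hcomm : Y0 n * (1 - N) = (1 - N) * Y0 n := by
      rw [mul_sub, sub_mul, one_mul, mul_one, hN, ← pow_succ', ← pow_succ]
    rw [hAval, hAinv, mul_assoc, hcomm, ← mul_assoc, hinv, one_mul]
  constructor
  · exact ⟨A, hA1, hA2⟩
  · have hXC : X + C = ↑A * X * ↑A⁻¹ := by
      conv_rhs => rw [hA1]
      rw [← mul_assoc, ← mul_assoc, Units.mul_inv, one_mul, mul_assoc,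
        Units.mul_inv, mul_one]
    refine ⟨n, ?_⟩
    rw [hXC, Units.conj_pow, subd_pow_n, mul_zero, zero_mul]

end
end

section
/- Let n ≥ 2 be even, let χ(t) = t^n − (n−1)!, let X_1 = X(a(1)) where a(1) = (−(n−1), −(n−2), …, −1), and let Y_0 be the n×n matrix with superdiagonal entries all 1. Then χ(X_1 + Y_0^{n−1}) = −2·(n−1)!·I; consequently the transformation Φ_{−p} ∘ Ψ_χ ∘ Φ_p with p(t) = t^{n−1} sends the pair (X_1, Y_0) to a pair whose second component is Y_0 − 2·(n−1)!·I, which is not conjugate to Y_0, so this transformation does not fix the conjugacy class of (X_1, Y_0). -/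
open Matrix Polynomial

noncomputable section

-- ===== auxiliary lemmas for even_case_not_fixed =====

lemma Y0_pow_aux (n k : ℕ) :
    (Y0 n)^k = Matrix.of fun i j : Fin n => if (j:ℕ) = (i:ℕ) + k then 1 else 0 := by
  induction k with
  | zero => ext i j; simp [Matrix.one_apply, Fin.ext_iff, eq_comm]
  | succ k ih =>
    rw [pow_succ, ih]
    ext i j
    rw [Matrix.mul_apply, Matrix.of_apply]
    simp only [Matrix.of_apply]
    by_cases hj : (j:ℕ) = (i:ℕ) + k + 1
    · have hik : (i:ℕ) + k < n := by omega
      rw [Finset.sum_eq_single (⟨(i:ℕ)+k, hik⟩ : Fin n)]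
      · simp [Y0, hj, Nat.add_assoc]
      · intro l _ hl
        have : (l:ℕ) ≠ (i:ℕ) + k := fun h => hl (Fin.ext h)
        simp [Y0, this]
      · simp
    · rw [if_neg (by omega : ¬ (j:ℕ) = (i:ℕ) + (k+1))]
      apply Finset.sum_eq_zero
      intro l _
      by_cases h1 : (l:ℕ) = (i:ℕ) + k
      · have : (j:ℕ) ≠ (l:ℕ) + 1 := by omega
        simp [Y0, this]
      · simp [Y0, h1]

open scoped Fin.NatCast Fin.CommRing

/-- generalized cyclic shift-by-k matrix with weights. -/
def genMat {n : ℕ} [NeZero n] (k : Fin n) (w : Fin n → ℂ) : Mat n :=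
  Matrix.of fun i j => if i = j + k then w j else 0

lemma genMat_mul {n : ℕ} [NeZero n] (k : Fin n) (w c : Fin n → ℂ) :
    genMat k w * genMat 1 c = genMat (k + 1) (fun j => w (j + 1) * c j) := by
  ext i j
  rw [Matrix.mul_apply]
  simp only [genMat, Matrix.of_apply]
  have key : ∀ l : Fin n, (if i = l + k then w l else 0) * (if l = j + 1 then c j else 0)
      = if l = j + 1 then (if i = (j + 1) + k then w (j+1) * c j else 0) else 0 := by
    intro l
    by_cases h : l = j + 1
    · subst h; split_ifs <;> simp
    · simp [h]
  rw [Finset.sum_congr rfl fun l _ => key l, Finset.sum_ite_eq' Finset.univ (j+1)]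
  simp only [Finset.mem_univ, if_true]
  rw [show (j + 1) + k = j + (k + 1) by ring]

lemma genMat_pow {n : ℕ} [NeZero n] (c : Fin n → ℂ) (m : ℕ) :
    genMat 1 c ^ m
      = genMat (m : Fin n) (fun j => ∏ t ∈ Finset.range m, c (j + (t : Fin n))) := by
  induction m with
  | zero =>
    ext i j
    simp [genMat, Matrix.one_apply, eq_comm]
  | succ m ih =>
    rw [pow_succ, ih, genMat_mul,
      show ((m + 1 : ℕ) : Fin n) = (m : Fin n) + 1 by push_cast; ring]
    have hw : (fun j : Fin n => (∏ t ∈ Finset.range m, c ((j + 1) + (t : Fin n))) * c j)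
        = fun j : Fin n => ∏ t ∈ Finset.range (m + 1), c (j + (t : Fin n)) := by
      funext j
      rw [Finset.prod_range_succ']
      congr 1
      · exact Finset.prod_congr rfl fun t _ => by
          rw [show j + ((t + 1 : ℕ) : Fin n) = (j + 1) + (t : Fin n) by push_cast; ring]
      · simp
    rw [hw]

lemma genMat_pow_self {n : ℕ} [NeZero n] (c : Fin n → ℂ) :
    genMat 1 c ^ n = (∏ s : Fin n, c s) • (1 : Mat n) := by
  rw [genMat_pow, Fin.natCast_self]
  have hw : (fun j : Fin n => ∏ t ∈ Finset.range n, c (j + (t : Fin n)))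
      = fun _ : Fin n => ∏ s : Fin n, c s := by
    funext j
    rw [← Fin.prod_univ_eq_prod_range (fun t : ℕ => c (j + (t : Fin n))) n]
    refine Fintype.prod_equiv (Equiv.addLeft j) _ _ fun t => ?_
    simp [Fin.cast_val_eq_self]
  rw [hw]
  ext i j
  simp [genMat, Matrix.one_apply, mul_comm]

def cvec (n : ℕ) : Fin n → ℂ := fun j => if (j:ℕ) = n - 1 then 1 else (j:ℂ) + 1 - n

lemma M_eq_genMat (n : ℕ) (hn : 2 ≤ n) [NeZero n] :
    subd n (avec n 1) + Y0 n ^ (n - 1) = genMat 1 (cvec n) := by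
  ext i j
  have hjlt : (j:ℕ) < n := j.is_lt
  have hilt : (i:ℕ) < n := i.is_lt
  have hadd : ((j + 1 : Fin n) : ℕ) = ((j:ℕ) + 1) % n := by
    rw [Fin.val_add, Fin.val_one']
    rw [Nat.mod_eq_of_lt (show 1 < n by omega)]
  have hfe : (i = j + 1) ↔ (i:ℕ) = ((j:ℕ) + 1) % n := by
    rw [Fin.ext_iff, hadd]
  simp only [Matrix.add_apply, subd, Y0_pow_aux, genMat, Matrix.of_apply, cvec, avec]
  by_cases hj : (j:ℕ) = n - 1
  · have hmod : ((j:ℕ) + 1) % n = 0 := by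
      rw [show (j:ℕ) + 1 = n by omega, Nat.mod_self]
    rw [if_pos hj]
    rw [if_neg (show ¬ (i:ℕ) = (j:ℕ) + 1 by omega)]
    by_cases hi : (i:ℕ) = 0
    · rw [if_pos (by omega : (j:ℕ) = (i:ℕ) + (n-1)), if_pos (hfe.mpr (by omega))]
      simp
    · rw [if_neg (by omega : ¬ (j:ℕ) = (i:ℕ) + (n-1)),
        if_neg (show ¬ i = j + 1 from fun h => hi (hmod ▸ hfe.mp h))]
      simp
  · have hmod : ((j:ℕ) + 1) % n = (j:ℕ) + 1 := Nat.mod_eq_of_lt (by omega)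
    rw [if_neg hj, if_neg (by omega : ¬ (j:ℕ) = (i:ℕ) + (n-1))]
    by_cases hij : (i:ℕ) = (j:ℕ) + 1
    · rw [if_pos hij, if_pos (hfe.mpr (by omega)),
        if_neg (by omega : ¬ (i:ℕ) < 1)]
      push_cast [hij]
      ring
    · rw [if_neg hij, if_neg (fun h => hij (by rw [hfe] at h; omega))]
      simp

lemma prod_sub_factorial (m : ℕ) :
    ∏ t ∈ Finset.range m, (m - t) = Nat.factorial m := by
  induction m with
  | zero => simp
  | succ m ih =>
    rw [Finset.prod_range_succ']
    simp only [Nat.add_sub_cancel, Nat.sub_zero]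
    rw [show (∏ t ∈ Finset.range m, (m + 1 - (t + 1))) = ∏ t ∈ Finset.range m, (m - t) from
      Finset.prod_congr rfl fun t _ => by omega]
    rw [ih, Nat.factorial_succ, Nat.mul_comm]

lemma prod_cvec (n : ℕ) (hn : 2 ≤ n) (heven : Even n) [NeZero n] :
    ∏ s : Fin n, cvec n s = -((Nat.factorial (n - 1) : ℂ)) := by
  obtain ⟨m, rfl⟩ : ∃ m, n = m + 1 := ⟨n - 1, by omega⟩
  have hcv : ∀ s : Fin (m+1), cvec (m+1) s
      = (fun t : ℕ => if t = m then 1 else (t:ℂ) + 1 - (m+1)) (s:ℕ) := by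
    intro s; simp [cvec]
  rw [Finset.prod_congr rfl fun s _ => hcv s,
    Fin.prod_univ_eq_prod_range (fun t : ℕ => if t = m then 1 else (t:ℂ) + 1 - (m+1)) (m+1),
    Finset.prod_range_succ, if_pos rfl, mul_one]
  have hterm : ∀ t ∈ Finset.range m,
      (if t = m then (1:ℂ) else (t:ℂ) + 1 - (m+1)) = (-1) * ((m - t : ℕ) : ℂ) := by
    intro t ht
    rw [Finset.mem_range] at ht
    rw [if_neg (by omega), Nat.cast_sub (le_of_lt ht)]
    ring
  rw [Finset.prod_congr rfl hterm, Finset.prod_mul_distrib, Finset.prod_const,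
    ← Nat.cast_prod, prod_sub_factorial]
  have hodd : Odd m := by
    rcases heven with ⟨k, hk⟩; exact ⟨k - 1, by omega⟩
  rw [Finset.card_range, hodd.neg_one_pow]
  simp

lemma M_pow_n (n : ℕ) (hn : 2 ≤ n) (heven : Even n) [NeZero n] :
    (subd n (avec n 1) + Y0 n ^ (n - 1)) ^ n
      = (-((Nat.factorial (n - 1) : ℂ))) • (1 : Mat n) := by
  rw [M_eq_genMat n hn, genMat_pow_self, prod_cvec n hn heven]

lemma trace_Y0 (n : ℕ) : Matrix.trace (Y0 n) = 0 := by
  simp [Matrix.trace, Matrix.diag, Y0]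


/-- The even case: for `χ(t) = tⁿ - (n-1)!` and `p(t) = t^{n-1}`, one has
`χ(X₁ + Y₀^{n-1}) = -2(n-1)! I`, the second component of
`Φ_{-p}Ψ_χΦ_p (X₁, Y₀)` is `Y₀ - 2(n-1)! I`, which is not conjugate to `Y₀`,
so `Φ_{-p}Ψ_χΦ_p` does not fix the conjugacy class of `(X₁, Y₀)`. -/
theorem even_case_not_fixed (n : ℕ) (hn : 2 ≤ n) (heven : Even n) :
    aeval (subd n (avec n 1) + Y0 n ^ (n - 1))
        (Polynomial.X ^ n - Polynomial.C ((Nat.factorial (n - 1) : ℂ))) =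
      (-(2 * ((Nat.factorial (n - 1) : ℂ)))) • (1 : Mat n) ∧
    (phiPair (-(Polynomial.X ^ (n - 1)))
        (psiPair (Polynomial.X ^ n - Polynomial.C ((Nat.factorial (n - 1) : ℂ)))
          (phiPair (Polynomial.X ^ (n - 1)) (subd n (avec n 1), Y0 n)))).2 =
      Y0 n - (2 * ((Nat.factorial (n - 1) : ℂ))) • (1 : Mat n) ∧
    (¬ ∃ A : (Mat n)ˣ,
        Y0 n - (2 * ((Nat.factorial (n - 1) : ℂ))) • (1 : Mat n) = ↑A⁻¹ * Y0 n * ↑A) ∧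
    ¬ SimConj (subd n (avec n 1), Y0 n)
        (phiPair (-(Polynomial.X ^ (n - 1)))
          (psiPair (Polynomial.X ^ n - Polynomial.C ((Nat.factorial (n - 1) : ℂ)))
            (phiPair (Polynomial.X ^ (n - 1)) (subd n (avec n 1), Y0 n)))) := by
  haveI : NeZero n := ⟨by omega⟩
  set f : ℂ := ((Nat.factorial (n - 1) : ℂ)) with hf
  have hfne : f ≠ 0 := Nat.cast_ne_zero.mpr (Nat.factorial_ne_zero _)
  have h1 : aeval (subd n (avec n 1) + Y0 n ^ (n - 1))
      (Polynomial.X ^ n - Polynomial.C f) = (-(2 * f)) • (1 : Mat n) := by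
    rw [map_sub, aeval_X_pow, aeval_C, M_pow_n n hn heven,
      Algebra.algebraMap_eq_smul_one, ← sub_smul]
    congr 1
    ring
  have h2 : (phiPair (-(Polynomial.X ^ (n - 1)))
        (psiPair (Polynomial.X ^ n - Polynomial.C f)
          (phiPair (Polynomial.X ^ (n - 1)) (subd n (avec n 1), Y0 n)))).2 =
      Y0 n - (2 * f) • (1 : Mat n) := by
    simp only [phiPair, psiPair]
    rw [aeval_X_pow, h1, neg_smul, ← sub_eq_add_neg]
  have h3 : ¬ ∃ A : (Mat n)ˣ,
      Y0 n - (2 * f) • (1 : Mat n) = ↑A⁻¹ * Y0 n * ↑A := by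
    rintro ⟨A, hA⟩
    have htr := congrArg Matrix.trace hA
    rw [Matrix.trace_sub, Matrix.trace_smul, Matrix.trace_one, trace_Y0,
      Matrix.trace_mul_cycle, ← Units.val_mul, mul_inv_cancel, Units.val_one, one_mul,
      trace_Y0] at htr
    have hcard : (Fintype.card (Fin n) : ℂ) ≠ 0 := by
      simp only [Fintype.card_fin]
      exact Nat.cast_ne_zero.mpr (by omega)
    have : (2 * f) • (Fintype.card (Fin n) : ℂ) ≠ 0 := by
      simp only [smul_eq_mul]
      exact mul_ne_zero (mul_ne_zero two_ne_zero hfne) hcard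
    rw [zero_sub, neg_eq_zero] at htr
    exact this htr
  refine ⟨h1, h2, h3, ?_⟩
  rintro ⟨A, -, hA2⟩
  rw [h2] at hA2
  exact h3 ⟨A, hA2⟩


end
end
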